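/- arXiv:1709.04039 — 10 statements merged into one kernel-verified Lean document; each statement's English description precedes it below -/
import Mathlib

section
/- For any prime p with p ≡ 1 (mod 3), and any a ≥ 1, the sum ∑_{n=0}^{p^a - 1} C(2n, n) is congruent to 1 modulo p. -/
open Finset Nat

section aux
variable {p : ℕ} [hF : Fact p.Prime]

lemma my_podd (h3 : p % 3 = 1) : p % 2 = 1 := by
  have := hF.out.eq_one_or_self_of_dvd 2
  rcases Nat.Prime.eq_two_or_odd hF.out with h | h
  · subst h; omega
  · exact h

lemma my_two_m (h3 : p % 3 = 1) : 2 * ((p - 1) / 2) = p - 1 := by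
  have := my_podd h3
  omega

lemma my_neg_three_sq (h3 : p % 3 = 1) : ∃ x : ZMod p, x ≠ 0 ∧ x ^ 2 = -3 := by
  have hp := hF.out
  obtain ⟨g, hg⟩ := IsCyclic.exists_generator (α := (ZMod p)ˣ)
  have hord : orderOf g = p - 1 := by
    rw [orderOf_eq_card_of_forall_mem_zpowers hg, Nat.card_eq_fintype_card, ZMod.card_units]
  have h3d : 3 ∣ p - 1 := by omega
  have hp7 : 7 ≤ p := by
    have h2 := hp.two_le
    rcases Nat.lt_or_ge p 7 with h | h
    · interval_cases p <;> first | omega | (exfalso; revert hp; decide)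
    · exact h
  set k := (p - 1) / 3 with hk
  have hk3 : 3 * k = p - 1 := Nat.mul_div_cancel' h3d
  have hkpos : 0 < k := by omega
  have hklt : k < p - 1 := by omega
  set ω : (ZMod p)ˣ := g ^ k with hω
  have hω3 : ω ^ 3 = 1 := by
    rw [hω, ← pow_mul, mul_comm, hk3, ← hord, pow_orderOf_eq_one]
  have hω1 : ω ≠ 1 := by
    intro h
    have := orderOf_dvd_of_pow_eq_one h
    rw [hord] at this
    exact absurd (Nat.le_of_dvd hkpos this) (by omega)
  set w : ZMod p := (↑ω : ZMod p) with hw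
  have hw3 : w ^ 3 = 1 := by
    rw [hw, ← Units.val_pow_eq_pow_val, hω3, Units.val_one]
  have hw1 : w ≠ 1 := by
    intro h
    exact hω1 (Units.ext (by rw [← hw, h, Units.val_one]))
  have hsum : w ^ 2 + w + 1 = 0 := by
    have hfac : (w - 1) * (w ^ 2 + w + 1) = 0 := by linear_combination hw3
    rcases mul_eq_zero.mp hfac with h | h
    · exact absurd (by linear_combination h) hw1
    · exact h
  refine ⟨2 * w + 1, ?_, by linear_combination 4 * hsum⟩
  intro h0
  have h9 : ((-3 : ZMod p)) = 0 := by
    rw [← (by linear_combination 4 * hsum : (2 * w + 1) ^ 2 = (-3 : ZMod p)), h0]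
    ring
  have h3z : ((3 : ℕ) : ZMod p) = 0 := by
    push_cast
    linear_combination -h9
  rw [ZMod.natCast_eq_zero_iff] at h3z
  have := (Nat.prime_dvd_prime_iff_eq hp Nat.prime_three).mp h3z
  omega

lemma my_neg_three_pow (h3 : p % 3 = 1) : ((-3 : ZMod p)) ^ ((p - 1) / 2) = 1 := by
  obtain ⟨x, hx0, hx⟩ := my_neg_three_sq h3
  have : 2 * ((p - 1) / 2) = p - 1 := my_two_m h3
  rw [← hx, ← pow_mul, this]
  exact ZMod.pow_card_sub_one_eq_one hx0

lemma my_cast_pred (h3 : p % 3 = 1) : ((p - 1 : ℕ) : ZMod p) = -1 := by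
  have h1 : 1 ≤ p := hF.out.one_le
  push_cast [Nat.cast_sub h1]
  rw [ZMod.natCast_self]
  ring

lemma my_cb_eq (h3 : p % 3 = 1) : ∀ r ≤ (p - 1) / 2,
    ((r.centralBinom : ℕ) : ZMod p) = (-4) ^ r * ((((p - 1) / 2).choose r : ℕ) : ZMod p) := by
  have h2m := my_two_m (p := p) h3
  have hp2 := hF.out.two_le
  have hm : 2 * ((((p - 1) / 2 : ℕ)) : ZMod p) = -1 := by
    rw [← Nat.cast_ofNat, ← Nat.cast_mul, h2m, my_cast_pred h3]
  intro r hr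
  induction r with
  | zero => simp [Nat.centralBinom]
  | succ r ih =>
    have ihr := ih (by omega)
    set m := (p - 1) / 2 with hmdef
    have hne : (((r + 1 : ℕ)) : ZMod p) ≠ 0 := by
      rw [Ne, ZMod.natCast_eq_zero_iff]
      intro hdvd
      have := Nat.le_of_dvd (by omega) hdvd
      omega
    apply mul_left_cancel₀ hne
    have h1 : (((r + 1) * (r + 1).centralBinom : ℕ) : ZMod p)
        = ((2 * (2 * r + 1) * r.centralBinom : ℕ) : ZMod p) := by
      rw [Nat.succ_mul_centralBinom_succ]
    push_cast at h1
    have h2 : ((m.choose (r + 1) * (r + 1) : ℕ) : ZMod p)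
        = ((m.choose r * (m - r) : ℕ) : ZMod p) := by
      rw [Nat.choose_succ_right_eq]
    have hsub : ((m - r : ℕ) : ZMod p) = (m : ZMod p) - r := by
      rw [Nat.cast_sub (by omega)]
    push_cast [hsub] at h2
    push_cast
    linear_combination h1 + 2 * (2 * (r : ZMod p) + 1) * ihr - (-4 : ZMod p) ^ (r + 1) * h2
      + 2 * (-4 : ZMod p) ^ r * ((m.choose r : ℕ) : ZMod p) * hm

lemma my_cb_zero (h3 : p % 3 = 1) {r : ℕ} (h1 : (p - 1) / 2 < r) (h2 : r < p) :
    ((r.centralBinom : ℕ) : ZMod p) = 0 := by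
  have h2m := my_two_m (p := p) h3
  rw [ZMod.natCast_eq_zero_iff, Nat.centralBinom]
  exact Nat.Prime.dvd_choose hF.out h2 (by omega) (by omega)

lemma my_sum_cb (h3 : p % 3 = 1) : ∑ r ∈ range p, ((r.centralBinom : ℕ) : ZMod p) = 1 := by
  have h2m := my_two_m (p := p) h3
  have hp2 := hF.out.two_le
  set m := (p - 1) / 2 with hmdef
  have hsub : range (m + 1) ⊆ range p := by
    intro x hx
    simp only [mem_range] at *
    omega
  have hstep : ∑ r ∈ range p, ((r.centralBinom : ℕ) : ZMod p)
      = ∑ r ∈ range (m + 1), ((r.centralBinom : ℕ) : ZMod p) := by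
    refine (Finset.sum_subset hsub ?_).symm
    intro x hx hx2
    simp only [mem_range] at *
    exact my_cb_zero h3 (by omega) (by omega)
  rw [hstep]
  have hcong : ∑ r ∈ range (m + 1), ((r.centralBinom : ℕ) : ZMod p)
      = ∑ r ∈ range (m + 1), (-4 : ZMod p) ^ r * ((m.choose r : ℕ) : ZMod p) := by
    refine Finset.sum_congr rfl ?_
    intro r hr
    simp only [mem_range] at hr
    exact my_cb_eq h3 r (by omega)
  rw [hcong]
  have hpow : ((-4 : ZMod p) + 1) ^ m = ∑ r ∈ range (m + 1),
      (-4 : ZMod p) ^ r * 1 ^ (m - r) * (m.choose r : ℕ) := add_pow (-4 : ZMod p) 1 m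
  simp only [one_pow, mul_one] at hpow
  have : ((-4 : ZMod p) + 1) = -3 := by ring
  rw [this] at hpow
  rw [← hpow]
  exact my_neg_three_pow h3

lemma my_cb_mul (h3 : p % 3 = 1) (q r : ℕ) (hr : r < p) :
    (((p * q + r).centralBinom : ℕ) : ZMod p)
      = ((q.centralBinom : ℕ) : ZMod p) * ((r.centralBinom : ℕ) : ZMod p) := by
  have h2m := my_two_m (p := p) h3
  have hp2 := hF.out.two_le
  have hppos : 0 < p := by omega
  have lucas := Choose.choose_modEq_choose_mod_mul_choose_div_nat
    (n := 2 * (p * q + r)) (k := p * q + r) (p := p)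
  have hcast := (ZMod.natCast_eq_natCast_iff _ _ _).mpr lucas
  push_cast at hcast
  have hnm : (p * q + r) % p = r := by
    rw [Nat.mul_add_mod, Nat.mod_eq_of_lt hr]
  have hnd : (p * q + r) / p = q := by
    rw [Nat.mul_add_div hppos, Nat.div_eq_of_lt hr, add_zero]
  rcases Nat.lt_or_ge (2 * r) p with h2r | h2r
  · have e1 : 2 * (p * q + r) = p * (2 * q) + 2 * r := by ring
    have h2nm : (2 * (p * q + r)) % p = 2 * r := by
      rw [e1, Nat.mul_add_mod, Nat.mod_eq_of_lt h2r]
    have h2nd : (2 * (p * q + r)) / p = 2 * q := by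
      rw [e1, Nat.mul_add_div hppos, Nat.div_eq_of_lt h2r, add_zero]
    rw [h2nm, h2nd, hnm, hnd] at hcast
    rw [Nat.centralBinom, Nat.centralBinom, Nat.centralBinom, hcast]
    push_cast
    ring
  · have e1 : 2 * (p * q + r) = p * (2 * q + 1) + (2 * r - p) := by
      have hh : p * (2 * q + 1) = 2 * (p * q) + p := by ring
      omega
    have hlt : 2 * r - p < p := by omega
    have h2nm : (2 * (p * q + r)) % p = 2 * r - p := by
      rw [e1, Nat.mul_add_mod, Nat.mod_eq_of_lt hlt]
    have h2nd : (2 * (p * q + r)) / p = 2 * q + 1 := by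
      rw [e1, Nat.mul_add_div hppos, Nat.div_eq_of_lt hlt, add_zero]
    rw [h2nm, h2nd, hnm, hnd] at hcast
    have hzero : (2 * r - p).choose r = 0 := Nat.choose_eq_zero_of_lt (by omega)
    rw [Nat.centralBinom, hcast, hzero]
    rw [my_cb_zero h3 (r := r) (by omega) hr]
    push_cast
    ring

end aux

lemma my_sum_range_mul {M : Type*} [AddCommMonoid M] (f : ℕ → M) (N n : ℕ) :
    ∑ i ∈ Finset.range (N * n), f i
      = ∑ q ∈ Finset.range N, ∑ r ∈ Finset.range n, f (n * q + r) := by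
  induction N with
  | zero => simp
  | succ N ih =>
    rw [Nat.succ_mul, Finset.sum_range_add, ih, Finset.sum_range_succ]
    congr 1
    refine Finset.sum_congr rfl fun r _ => ?_
    rw [mul_comm n N]

lemma my_sum_pow {p : ℕ} [hF : Fact p.Prime] (h3 : p % 3 = 1) (a : ℕ) (ha : 1 ≤ a) :
    ∑ n ∈ Finset.range (p ^ a), ((n.centralBinom : ℕ) : ZMod p) = 1 := by
  induction a with
  | zero => omega
  | succ a ih =>
    rcases Nat.eq_or_lt_of_le ha with h | h
    · rw [← h, pow_one]
      exact my_sum_cb h3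
    · have ha' : 1 ≤ a := by omega
      rw [pow_succ, my_sum_range_mul]
      have : ∀ q ∈ Finset.range (p ^ a), ∑ r ∈ Finset.range p,
          (((p * q + r).centralBinom : ℕ) : ZMod p)
          = ((q.centralBinom : ℕ) : ZMod p) := by
        intro q _
        have : ∑ r ∈ Finset.range p, (((p * q + r).centralBinom : ℕ) : ZMod p)
            = ∑ r ∈ Finset.range p,
              ((q.centralBinom : ℕ) : ZMod p) * ((r.centralBinom : ℕ) : ZMod p) := by
          refine Finset.sum_congr rfl fun r hr => ?_
          exact my_cb_mul h3 q r (Finset.mem_range.mp hr)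
        rw [this, ← Finset.mul_sum, my_sum_cb h3, mul_one]
      rw [Finset.sum_congr rfl this, ih ha']

theorem stmt0 (p a : ℕ) (hp : p.Prime) (h3 : p % 3 = 1) (ha : 1 ≤ a) :
    (∑ n ∈ Finset.range (p^a), ((2*n).choose n : ℤ)) ≡ 1 [ZMOD (p : ℤ)] := by
  haveI : Fact p.Prime := ⟨hp⟩
  have key := my_sum_pow h3 a ha
  rw [← ZMod.intCast_eq_intCast_iff]
  push_cast
  simp only [Nat.centralBinom] at key
  exact key
end

section
/- For any prime p with p ≡ 2 (mod 3), and any odd a ≥ 1, the sum ∑_{n=0}^{p^a - 1} C(2n, n) is congruent to -1 modulo p. -/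
open Finset

private lemma reflTrick (w : ℕ → ℕ) (m : ℕ) :
    ∑ i ∈ range (m + 1), w (m - i) * (Nat.centralBinom i * Nat.centralBinom (m - i)) =
      ∑ i ∈ range (m + 1), w i * (Nat.centralBinom i * Nat.centralBinom (m - i)) := by
  have h := Finset.sum_range_reflect
    (fun j => w (m - j) * (Nat.centralBinom j * Nat.centralBinom (m - j))) (m + 1)
  rw [← h]
  refine Finset.sum_congr rfl fun i hi => ?_
  simp only [Finset.mem_range] at hi
  have e1 : m + 1 - 1 - i = m - i := by omega
  have e2 : m - (m - i) = i := by omega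
  simp only [e1, e2]
  ring

private lemma key1 (m : ℕ) :
    2 * ∑ i ∈ range (m + 1), (2 * i + 1) * (Nat.centralBinom i * Nat.centralBinom (m - i)) =
      (2 * m + 2) * ∑ i ∈ range (m + 1), Nat.centralBinom i * Nat.centralBinom (m - i) := by
  have h := reflTrick (fun i => 2 * i + 1) m
  calc 2 * ∑ i ∈ range (m + 1), (2 * i + 1) * (Nat.centralBinom i * Nat.centralBinom (m - i))
      = (∑ i ∈ range (m + 1), (2 * i + 1) * (Nat.centralBinom i * Nat.centralBinom (m - i))) +
        ∑ i ∈ range (m + 1), (2 * (m - i) + 1) * (Nat.centralBinom i * Nat.centralBinom (m - i)) := by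
        rw [h, two_mul]
    _ = ∑ i ∈ range (m + 1),
        ((2 * i + 1) + (2 * (m - i) + 1)) * (Nat.centralBinom i * Nat.centralBinom (m - i)) := by
        rw [← Finset.sum_add_distrib]
        exact Finset.sum_congr rfl fun i hi => by ring
    _ = ∑ i ∈ range (m + 1), (2 * m + 2) * (Nat.centralBinom i * Nat.centralBinom (m - i)) := by
        refine Finset.sum_congr rfl fun i hi => ?_
        simp only [Finset.mem_range] at hi
        congr 1
        omega
    _ = (2 * m + 2) * ∑ i ∈ range (m + 1), Nat.centralBinom i * Nat.centralBinom (m - i) := by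
        rw [Finset.mul_sum]

private lemma key2 (n : ℕ) :
    ∑ i ∈ range (n + 2), i * (Nat.centralBinom i * Nat.centralBinom (n + 1 - i)) =
      ∑ i ∈ range (n + 1), (2 * (2 * i + 1)) * (Nat.centralBinom i * Nat.centralBinom (n - i)) := by
  rw [Finset.sum_range_succ']
  simp only [Nat.zero_mul, add_zero]
  refine Finset.sum_congr rfl fun i hi => ?_
  have e : n + 1 - (i + 1) = n - i := by omega
  rw [e, ← mul_assoc, Nat.succ_mul_centralBinom_succ, mul_assoc]

/-- The central binomial convolution identity. -/
private lemma cb_conv (n : ℕ) :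
    ∑ i ∈ range (n + 1), Nat.centralBinom i * Nat.centralBinom (n - i) = 4 ^ n := by
  induction n with
  | zero => simp [Nat.centralBinom]
  | succ n ih =>
    have main : (n + 1) * ∑ i ∈ range (n + 2), Nat.centralBinom i * Nat.centralBinom (n + 1 - i) =
        (n + 1) * 4 ^ (n + 1) := by
      calc (n + 1) * ∑ i ∈ range (n + 2), Nat.centralBinom i * Nat.centralBinom (n + 1 - i)
          = ∑ i ∈ range (n + 2), (n + 1) * (Nat.centralBinom i * Nat.centralBinom (n + 1 - i)) := by
            rw [Finset.mul_sum]
        _ = ∑ i ∈ range (n + 2), (i * (Nat.centralBinom i * Nat.centralBinom (n + 1 - i)) +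
              (n + 1 - i) * (Nat.centralBinom i * Nat.centralBinom (n + 1 - i))) := by
            refine Finset.sum_congr rfl fun i hi => ?_
            simp only [Finset.mem_range] at hi
            rw [← add_mul]
            congr 1
            omega
        _ = (∑ i ∈ range (n + 2), i * (Nat.centralBinom i * Nat.centralBinom (n + 1 - i))) +
              ∑ i ∈ range (n + 2), (n + 1 - i) * (Nat.centralBinom i * Nat.centralBinom (n + 1 - i)) := by
            rw [Finset.sum_add_distrib]
        _ = 2 * ∑ i ∈ range (n + 2), i * (Nat.centralBinom i * Nat.centralBinom (n + 1 - i)) := by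
            rw [reflTrick (fun i => i) (n + 1), two_mul]
        _ = 2 * ∑ i ∈ range (n + 1), (2 * (2 * i + 1)) *
              (Nat.centralBinom i * Nat.centralBinom (n - i)) := by rw [key2]
        _ = 2 * (2 * ∑ i ∈ range (n + 1), (2 * i + 1) *
              (Nat.centralBinom i * Nat.centralBinom (n - i))) := by
            congr 1
            rw [Finset.mul_sum]
            exact Finset.sum_congr rfl fun i hi => by ring
        _ = 2 * ((2 * n + 2) * ∑ i ∈ range (n + 1),
              Nat.centralBinom i * Nat.centralBinom (n - i)) := by rw [key1]
        _ = (n + 1) * 4 ^ (n + 1) := by rw [ih]; ring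
    exact Nat.eq_of_mul_eq_mul_left (Nat.succ_pos n) main

private lemma lucas_top (p : ℕ) (hp : p.Prime) (a : ℕ) :
    ∀ n, n < p ^ a → (((p ^ a - 1).choose n : ℕ) : ZMod p) = (-1) ^ n := by
  intro n
  induction n with
  | zero => simp
  | succ n ih =>
    intro hn
    have hn' : n < p ^ a := by omega
    have hpa : p ^ a - 1 + 1 = p ^ a := Nat.succ_pred_eq_of_pos (pow_pos hp.pos a)
    have pascal : (p ^ a).choose (n + 1) = (p ^ a - 1).choose n + (p ^ a - 1).choose (n + 1) := by
      conv_lhs => rw [← hpa]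
      rw [Nat.choose_succ_succ]
    have hdvd : p ∣ (p ^ a).choose (n + 1) :=
      hp.dvd_choose_pow (Nat.succ_ne_zero n) (by omega)
    have hz : (((p ^ a).choose (n + 1) : ℕ) : ZMod p) = 0 :=
      (ZMod.natCast_eq_zero_iff _ _).mpr hdvd
    rw [pascal] at hz
    push_cast at hz
    rw [ih hn'] at hz
    have : (((p ^ a - 1).choose (n + 1) : ℕ) : ZMod p) = -(-1) ^ n := by linear_combination hz
    rw [this]
    ring

private lemma dconv (p : ℕ) (hp : p.Prime) (a M : ℕ) (hM : 2 * M + 1 = p ^ a)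
    (n : ℕ) (hn : n < p ^ a) :
    ∑ i ∈ range (n + 1), ((-4 : ZMod p) ^ i * (M.choose i : ZMod p)) *
      ((-4 : ZMod p) ^ (n - i) * (M.choose (n - i) : ZMod p)) = 4 ^ n := by
  have vdm : (M + M).choose n = ∑ i ∈ range (n + 1), M.choose i * M.choose (n - i) := by
    rw [Nat.add_choose_eq]
    rw [Finset.Nat.sum_antidiagonal_eq_sum_range_succ_mk]
  have h2M : M + M = p ^ a - 1 := by omega
  calc ∑ i ∈ range (n + 1), ((-4 : ZMod p) ^ i * (M.choose i : ZMod p)) *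
        ((-4 : ZMod p) ^ (n - i) * (M.choose (n - i) : ZMod p))
      = ∑ i ∈ range (n + 1), (-4 : ZMod p) ^ n * ((M.choose i : ZMod p) * (M.choose (n - i))) := by
        refine Finset.sum_congr rfl fun i hi => ?_
        simp only [Finset.mem_range] at hi
        have hpow : (-4 : ZMod p) ^ n = (-4 : ZMod p) ^ i * (-4 : ZMod p) ^ (n - i) := by
          rw [← pow_add]; congr 1; omega
        rw [hpow]; ring
    _ = (-4 : ZMod p) ^ n * (((M + M).choose n : ℕ) : ZMod p) := by
        rw [← Finset.mul_sum, vdm]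
        push_cast
        ring
    _ = 4 ^ n := by
        rw [h2M, lucas_top p hp a n hn, ← mul_pow]
        norm_num

private lemma keyLemma (p : ℕ) (hp : p.Prime) (hp2 : p ≠ 2) (a M : ℕ)
    (hM : 2 * M + 1 = p ^ a) :
    ∀ n, n < p ^ a → ((Nat.centralBinom n : ℕ) : ZMod p) = (-4) ^ n * (M.choose n : ZMod p) := by
  haveI : Fact p.Prime := ⟨hp⟩
  have two_ne : (2 : ZMod p) ≠ 0 := by
    have : ((2 : ℕ) : ZMod p) ≠ 0 := by
      rw [Ne, ZMod.natCast_eq_zero_iff]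
      intro h
      exact hp2 ((Nat.prime_dvd_prime_iff_eq hp Nat.prime_two).mp h)
    simpa using this
  intro n
  induction n using Nat.strong_induction_on with
  | _ n IH =>
    intro hn
    match n, hn, IH with
    | 0, hn, IH => simp [Nat.centralBinom]
    | (k+1), hn, IH =>
      set n := k + 1 with hn_def
      have hc : ∑ i ∈ range (n + 1),
          ((Nat.centralBinom i : ℕ) : ZMod p) * ((Nat.centralBinom (n - i) : ℕ) : ZMod p)
            = 4 ^ n := by
        have := cb_conv n
        calc ∑ i ∈ range (n + 1),
            ((Nat.centralBinom i : ℕ) : ZMod p) * ((Nat.centralBinom (n - i) : ℕ) : ZMod p)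
            = ((∑ i ∈ range (n + 1), Nat.centralBinom i * Nat.centralBinom (n - i) : ℕ) : ZMod p) := by
              push_cast; ring
          _ = ((4 ^ n : ℕ) : ZMod p) := by rw [this]
          _ = 4 ^ n := by push_cast; ring
      have hd := dconv p hp a M hM n hn
      -- peel both sums
      set c : ℕ → ZMod p := fun i => ((Nat.centralBinom i : ℕ) : ZMod p) with hcdef
      set d : ℕ → ZMod p := fun i => (-4 : ZMod p) ^ i * (M.choose i : ZMod p) with hddef
      have hmid : ∀ i ∈ range k, c (i + 1) * c (n - (i + 1)) = d (i + 1) * d (n - (i + 1)) := by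
        intro i hi
        simp only [Finset.mem_range] at hi
        have h1 : i + 1 < n := by omega
        have h2 : n - (i + 1) < n := by omega
        simp only [hcdef, hddef]
        rw [IH (i + 1) h1 (by omega), IH (n - (i + 1)) h2 (by omega)]
      have expand : ∀ e : ℕ → ZMod p, ∑ i ∈ range (n + 1), e i * e (n - i) =
          (∑ i ∈ range k, e (i + 1) * e (n - (i + 1))) + e 0 * e n + e n * e 0 := by
        intro e
        rw [Finset.sum_range_succ, Finset.sum_range_succ']
        have e0 : n - 0 = n := by omega
        have en : n - n = 0 := by omega
        rw [e0, en]
        try ring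
      rw [expand c] at hc
      rw [expand d] at hd
      have hc0 : c 0 = 1 := by simp [hcdef, Nat.centralBinom]
      have hd0 : d 0 = 1 := by simp [hddef]
      have hsum_eq : (∑ i ∈ range k, c (i + 1) * c (n - (i + 1))) =
          ∑ i ∈ range k, d (i + 1) * d (n - (i + 1)) := Finset.sum_congr rfl hmid
      have h2 : 2 * c n = 2 * d n := by
        have := hc.trans hd.symm
        rw [hsum_eq, hc0, hd0] at this
        linear_combination this
      exact mul_left_cancel₀ two_ne h2

private lemma leg32 : legendreSym 3 (2 : ℤ) = -1 :=
  (legendreSym.eq_neg_one_iff 3).mpr (by decide)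

private lemma zmod2neg : ((1 : ℕ) : ZMod 2) = -1 := by decide

private lemma neg_three_pow (p : ℕ) (hp : p.Prime) (hp2 : p ≠ 2) (h3 : p % 3 = 2) :
    (-3 : ZMod p) ^ (p / 2) = -1 := by
  haveI : Fact p.Prime := ⟨hp⟩
  haveI : Fact (Nat.Prime 3) := ⟨by norm_num⟩
  have hp1 : p % 2 = 1 := hp.eq_two_or_odd.resolve_left hp2
  have hleg : legendreSym p (-3) = -1 := by
    have hmul : legendreSym p (-3) = legendreSym p (-1) * legendreSym p 3 := by
      rw [← legendreSym.mul]; norm_num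
    have hneg1 : legendreSym p (-1) = (-1 : ℤ) ^ (p / 2) := by
      rw [legendreSym.at_neg_one hp2, ZMod.χ₄_eq_neg_one_pow hp1]
    have hrec : legendreSym p ((3 : ℕ) : ℤ) = (-1 : ℤ) ^ (3 / 2 * (p / 2)) *
        legendreSym 3 ((p : ℕ) : ℤ) := legendreSym.quadratic_reciprocity' (by norm_num) hp2
    have h3p : legendreSym 3 ((p : ℕ) : ℤ) = -1 := by
      rw [legendreSym.mod]
      have : ((p : ℤ)) % ((3 : ℕ) : ℤ) = 2 := by omega
      rw [this]
      exact leg32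
    have h32 : ((3 : ℕ) : ℤ) = (3 : ℤ) := by norm_num
    rw [hmul, hneg1]
    rw [h32] at hrec
    rw [hrec, h3p]
    have hd32 : (3 : ℕ) / 2 = 1 := by norm_num
    rw [hd32, one_mul]
    have heven : ((-1 : ℤ)) ^ (p / 2) * ((-1 : ℤ)) ^ (p / 2) = 1 := by
      rw [← pow_add]; exact Even.neg_one_pow ⟨p / 2, rfl⟩
    linear_combination -heven
  have := legendreSym.eq_pow p (-3)
  rw [hleg] at this
  push_cast at this
  exact this.symm

theorem stmt1 (p a : ℕ) (hp : p.Prime) (h3 : p % 3 = 2) (ha : 1 ≤ a) (hodd : Odd a) :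
    (∑ n ∈ Finset.range (p^a), ((2*n).choose n : ℤ)) ≡ -1 [ZMOD (p : ℤ)] := by
  haveI : Fact p.Prime := ⟨hp⟩
  rw [← ZMod.intCast_eq_intCast_iff]
  push_cast
  rcases hp.eq_two_or_odd' with rfl | hoddp
  · -- p = 2
    have h0mem : (0 : ℕ) ∈ range (2 ^ a) := Finset.mem_range.mpr (pow_pos (by norm_num) a)
    have hvanish : ∀ b ∈ range (2 ^ a), b ≠ 0 → (((2 * b).choose b : ℕ) : ZMod 2) = 0 := by
      intro b hb hb0
      obtain ⟨k, rfl⟩ : ∃ k, b = k + 1 := ⟨b - 1, by omega⟩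
      have hsplit : (2 * (k + 1)).choose (k + 1) = 2 * ((2 * k + 1).choose k) := by
        have h1 : 2 * (k + 1) = (2 * k + 1) + 1 := by ring
        rw [h1, Nat.choose_succ_succ]
        have h2 : (2 * k + 1).choose (k + 1) = (2 * k + 1).choose k := by
          rw [← Nat.choose_symm (show k + 1 ≤ 2 * k + 1 by omega)]
          congr 1
          omega
        simp only [Nat.succ_eq_add_one]
        rw [h2]
        ring
      rw [hsplit]
      push_cast
      rw [show (2 : ZMod 2) = 0 from rfl]
      ring
    calc ∑ n ∈ range (2 ^ a), (((2 * n).choose n : ℕ) : ZMod 2)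
        = (((2 * 0).choose 0 : ℕ) : ZMod 2) := Finset.sum_eq_single_of_mem 0 h0mem hvanish
      _ = -1 := zmod2neg
  · -- p odd
    have hp1 : p % 2 = 1 := Nat.odd_iff.mp hoddp
    have hp2 : p ≠ 2 := by omega
    obtain ⟨q, hq⟩ : ∃ q, p = 2 * q + 1 := ⟨p / 2, by omega⟩
    set t := ∑ i ∈ range a, p ^ i with ht
    set M := q * t with hMdef
    have htz : (t : ℤ) = ∑ i ∈ range a, (p : ℤ) ^ i := by rw [ht]; push_cast; rfl
    have hgeom : ((p : ℤ) - 1) * (t : ℤ) = (p : ℤ) ^ a - 1 := by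
      rw [htz, mul_comm]; exact geom_sum_mul _ _
    have hqz : (p : ℤ) = 2 * (q : ℤ) + 1 := by exact_mod_cast congrArg (Nat.cast (R := ℤ)) hq
    have hM : 2 * M + 1 = p ^ a := by
      have key : ((2 * M + 1 : ℕ) : ℤ) = ((p ^ a : ℕ) : ℤ) := by
        have e1 : (M : ℤ) = (q : ℤ) * (t : ℤ) := by rw [hMdef]; push_cast; ring
        push_cast
        rw [e1]
        linear_combination hgeom - (t : ℤ) * hqz
      exact_mod_cast key
    have todd : Odd t := by
      have h1 : t % 2 = 1 := by
        rw [ht, Finset.sum_nat_mod]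
        have hterm : ∀ i ∈ range a, p ^ i % 2 = 1 % 2 := fun i _ => by
          rw [Nat.pow_mod, hp1, one_pow]
        rw [Finset.sum_congr rfl hterm, ← Finset.sum_nat_mod]
        simp [Nat.odd_iff.mp hodd]
      exact Nat.odd_iff.mpr h1
    have hkey := keyLemma p hp hp2 a M hM
    calc ∑ n ∈ range (p ^ a), (((2 * n).choose n : ℕ) : ZMod p)
        = ∑ n ∈ range (p ^ a), (-4 : ZMod p) ^ n * (M.choose n : ZMod p) := by
          refine Finset.sum_congr rfl fun n hn => ?_
          rw [Finset.mem_range] at hn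
          rw [← Nat.centralBinom_eq_two_mul_choose]
          exact hkey n hn
      _ = ∑ n ∈ range (M + 1), (-4 : ZMod p) ^ n * (M.choose n : ZMod p) := by
          symm
          apply Finset.sum_subset
          · exact Finset.range_subset_range.mpr (by omega)
          · intro x hx hx'
            rw [Finset.mem_range] at hx hx'
            rw [Nat.choose_eq_zero_of_lt (by omega)]
            push_cast
            ring
      _ = ((-4 : ZMod p) + 1) ^ M := by
          rw [add_pow]
          refine Finset.sum_congr rfl fun n hn => ?_
          rw [one_pow]
          ring
      _ = (-3 : ZMod p) ^ M := by norm_num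
      _ = -1 := by
          have hq2 : q = p / 2 := by omega
          rw [hMdef, pow_mul, hq2, neg_three_pow p hp hp2 h3, todd.neg_one_pow]
end

section
/- For any prime p with p ≡ 1 (mod 3), any a ≥ 1, and any natural number d ≤ p^a with d ≡ 0 (mod 3), the sum ∑_{n=0}^{p^a - 1} C(2n, n+d) is congruent to 1 modulo p. -/
open Polynomial

private lemma stmt3_tele {R : Type*} [CommRing R] (N : ℕ) :
    (∑ n ∈ Finset.range N, (X : R[X]) ^ (N - 1 - n) * (X + 1) ^ (2 * n)) * (X ^ 2 + X + 1)
      = (X + 1) ^ (2 * N) - X ^ N := by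
  induction N with
  | zero => simp
  | succ N ih =>
    have h1 : ∑ n ∈ Finset.range N, (X : R[X]) ^ (N + 1 - 1 - n) * (X + 1) ^ (2 * n)
        = X * ∑ n ∈ Finset.range N, (X : R[X]) ^ (N - 1 - n) * (X + 1) ^ (2 * n) := by
      rw [Finset.mul_sum]
      refine Finset.sum_congr rfl fun n hn => ?_
      rw [Finset.mem_range] at hn
      rw [← mul_assoc, ← pow_succ']
      congr 2
      omega
    rw [Finset.sum_range_succ, h1]
    have h0 : N + 1 - 1 - N = 0 := by omega
    rw [h0, pow_zero, one_mul]
    linear_combination (X : R[X]) * ih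

theorem stmt3 (p a d : ℕ) (hp : p.Prime) (h3 : p % 3 = 1) (ha : 1 ≤ a)
    (hd : d ≤ p ^ a) (hd3 : d % 3 = 0) :
    (∑ n ∈ Finset.range (p^a), ((2*n).choose (n + d) : ℤ)) ≡ 1 [ZMOD (p : ℤ)] := by
  haveI := Fact.mk hp
  set q := p ^ a with hq
  have hq3 : q % 3 = 1 := by
    rw [hq, Nat.pow_mod, h3, one_pow]
    rfl
  have hq2 : 2 ≤ q := by
    have h1 : p ≤ p ^ a := Nat.le_self_pow (by omega) p
    have := hp.two_le
    omega
  have hdq : d < q := by omega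
  set F : (ZMod p)[X] := ∑ n ∈ Finset.range q, X ^ (q - 1 - n) * (X + 1) ^ (2 * n) with hF
  -- the key polynomial identity
  have hH : F * (X ^ 2 + X + 1) = 1 + X ^ q + X ^ (2 * q) := by
    rw [hF, stmt3_tele]
    have frob : ((X : (ZMod p)[X]) + 1) ^ q = X ^ q + 1 := by
      rw [hq, add_pow_char_pow, one_pow]
    have h2q : ((X : (ZMod p)[X]) + 1) ^ (2 * q) = (X ^ q + 1) ^ 2 := by
      rw [mul_comm 2 q, pow_mul, frob]
    rw [h2q]
    ring
  -- coefficients of the RHS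
  have gzero : ∀ k : ℕ, k ≠ 0 → k ≠ q → k ≠ 2 * q →
      ((1 : (ZMod p)[X]) + X ^ q + X ^ (2 * q)).coeff k = 0 := by
    intro k h0 h1 h2
    simp [coeff_one, coeff_X_pow, h0, h1, h2]
  -- coefficients of the product
  have pcoeff : ∀ k : ℕ, (F * (X ^ 2 + X + 1)).coeff k
      = (if 2 ≤ k then F.coeff (k - 2) else 0)
        + (if 1 ≤ k then F.coeff (k - 1) else 0) + F.coeff k := by
    intro k
    have hsplit : F * (X ^ 2 + X + 1) = F * X ^ 2 + F * X ^ 1 + F := by ring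
    rw [hsplit, coeff_add, coeff_add, coeff_mul_X_pow', coeff_mul_X_pow']
  -- the main coefficient computation
  have key : ∀ m, m % 3 = 0 → m ≤ 2 * q - 2 → F.coeff m = 1 := by
    intro m
    induction m using Nat.strong_induction_on with
    | _ m ih =>
      intro hm3 hmle
      by_cases hm0 : m = 0
      · subst hm0
        have e : (F * (X ^ 2 + X + 1)).coeff 0
            = ((1 : (ZMod p)[X]) + X ^ q + X ^ (2 * q)).coeff 0 := by rw [hH]
        rw [pcoeff] at e
        simp only [show ¬ (2 ≤ 0) by omega, show ¬ (1 ≤ 0) by omega, if_false,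
          zero_add] at e
        rw [e]
        simp [coeff_one, coeff_X_pow, show ¬ (0 = q) by omega, show ¬ (0 = 2 * q) by omega]
      · have hm3' : 3 ≤ m := by omega
        have e1 : (F * (X ^ 2 + X + 1)).coeff m
            = ((1 : (ZMod p)[X]) + X ^ q + X ^ (2 * q)).coeff m := by rw [hH]
        have e2 : (F * (X ^ 2 + X + 1)).coeff (m - 1)
            = ((1 : (ZMod p)[X]) + X ^ q + X ^ (2 * q)).coeff (m - 1) := by rw [hH]
        rw [pcoeff, if_pos (by omega), if_pos (by omega),
          gzero m (by omega) (by omega) (by omega)] at e1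
        rw [pcoeff, if_pos (by omega), if_pos (by omega),
          gzero (m - 1) (by omega) (by omega) (by omega),
          show m - 1 - 2 = m - 3 by omega, show m - 1 - 1 = m - 2 by omega] at e2
        have e3 : F.coeff m = F.coeff (m - 3) := by linear_combination e1 - e2
        rw [e3, ih (m - 3) (by omega) (by omega) (by omega)]
  -- identify the sum with a coefficient of F
  have final : (∑ n ∈ Finset.range q, ((2 * n).choose (n + d) : ZMod p))
      = F.coeff (q - 1 + d) := by
    rw [hF, finset_sum_coeff]
    refine Finset.sum_congr rfl fun n hn => ?_
    rw [Finset.mem_range] at hn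
    rw [show q - 1 + d = (n + d) + (q - 1 - n) by omega, coeff_X_pow_mul,
      coeff_X_add_one_pow]
  have hcoeff := key (q - 1 + d) (by omega) (by omega)
  refine (ZMod.intCast_eq_intCast_iff _ _ _).mp ?_
  push_cast
  rw [final, hcoeff]
end

section
/- For any prime p with p ≡ 1 (mod 3), any a ≥ 1, and any natural number d ≤ p^a with d ≡ 2 (mod 3), the sum ∑_{n=0}^{p^a - 1} C(2n, n+d) is congruent to -1 modulo p. -/
open Polynomial Finset

theorem stmt4 (p a d : ℕ) (hp : p.Prime) (h3 : p % 3 = 1) (ha : 1 ≤ a)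
    (hd : d ≤ p ^ a) (hd3 : d % 3 = 2) :
    (∑ n ∈ Finset.range (p^a), ((2*n).choose (n + d) : ℤ)) ≡ -1 [ZMOD (p : ℤ)] := by
  haveI : Fact p.Prime := ⟨hp⟩
  set N := p ^ a with hN
  have hN3 : N % 3 = 1 := by rw [hN, Nat.pow_mod, h3, Nat.one_pow]
  have hN1 : 1 ≤ N := Nat.one_le_pow _ _ hp.pos
  obtain ⟨t, ht⟩ : ∃ t, N = 3 * t + 1 := ⟨N / 3, by omega⟩
  obtain ⟨s, hs⟩ : ∃ u, d = 3 * u + 2 := ⟨d / 3, by omega⟩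
  have hst : s < t := by omega
  set x : Polynomial (ZMod p) := X with hx
  set P : Polynomial (ZMod p) := ∑ k ∈ range N, ((1 + x) ^ 2) ^ k * x ^ (N - 1 - k) with hP
  set B : Polynomial (ZMod p) := ∑ k ∈ range t, (x ^ 3) ^ k with hB
  set A : Polynomial (ZMod p) := ∑ k ∈ range (2 * t + 1), (x ^ 3) ^ k with hA
  set Q : Polynomial (ZMod p) := A - x * B - x ^ (N + 1) * B with hQ
  -- P * (1 + x + x^2) = 1 + x^N + (x^N)^2
  have frob : (1 + x) ^ N = 1 + x ^ N := by
    rw [hN]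
    simpa using add_pow_char_pow (R := Polynomial (ZMod p)) (x := 1) (y := x) (p := p) (n := a)
  have hPmul : P * (1 + x + x ^ 2) = 1 + x ^ N + (x ^ N) ^ 2 := by
    have h1 : (1 + x) ^ 2 - x = 1 + x + x ^ 2 := by ring
    have := geom_sum₂_mul ((1 + x) ^ 2) x N
    rw [h1] at this
    rw [← hP] at this
    rw [this, ← pow_mul, mul_comm 2 N, pow_mul, frob]
    ring
  -- Q * (1 + x + x^2) = 1 + x^N + (x^N)^2, via multiplying by (x - 1)
  have hx1 : (x - 1 : Polynomial (ZMod p)) ≠ 0 := by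
    intro h
    have := congrArg (fun q => Polynomial.coeff q 1) h
    simp [hx, Polynomial.coeff_one, Polynomial.coeff_X, Polynomial.coeff_X_pow] at this
  have hQmul : Q * (1 + x + x ^ 2) = 1 + x ^ N + (x ^ N) ^ 2 := by
    have hcancel : Q * (1 + x + x ^ 2) * (x - 1) = (1 + x ^ N + (x ^ N) ^ 2) * (x - 1) := by
      have hAe : A * (x ^ 3 - 1) = (x ^ 3) ^ (2 * t + 1) - 1 := geom_sum_mul _ _
      have hBe : B * (x ^ 3 - 1) = (x ^ 3) ^ t - 1 := geom_sum_mul _ _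
      have h2 : (1 + x + x ^ 2) * (x - 1) = x ^ 3 - 1 := by ring
      calc Q * (1 + x + x ^ 2) * (x - 1) = Q * (x ^ 3 - 1) := by rw [mul_assoc, h2]
        _ = A * (x ^ 3 - 1) - x * (B * (x ^ 3 - 1)) - x ^ (N + 1) * (B * (x ^ 3 - 1)) := by
            rw [hQ]; ring
        _ = (x ^ 3) ^ (2 * t + 1) - 1 - x * ((x ^ 3) ^ t - 1)
              - x ^ (N + 1) * ((x ^ 3) ^ t - 1) := by rw [hAe, hBe]
        _ = (1 + x ^ N + (x ^ N) ^ 2) * (x - 1) := by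
            rw [ht]; ring
    exact mul_right_cancel₀ hx1 hcancel
  have hPQ : P = Q := by
    have h110 : (1 + x + x ^ 2 : Polynomial (ZMod p)) ≠ 0 := by
      intro h
      have := congrArg (fun q => Polynomial.coeff q 2) h
      simp [hx, Polynomial.coeff_one, Polynomial.coeff_X, Polynomial.coeff_X_pow] at this
    exact mul_right_cancel₀ h110 (hPmul.trans hQmul.symm)
  -- coefficient extraction at m = 3t + 3s + 2 = N + d - 1
  set m : ℕ := 3 * t + 3 * s + 2 with hm
  have hcoeffP : P.coeff m = ∑ n ∈ range N, ((2 * n).choose (n + d) : ZMod p) := by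
    rw [hP, Polynomial.finset_sum_coeff]
    refine Finset.sum_congr rfl fun k hk => ?_
    have hkN : k < N := Finset.mem_range.mp hk
    rw [← pow_mul, hx, Polynomial.coeff_mul_X_pow']
    have hle : N - 1 - k ≤ m := by omega
    rw [if_pos hle]
    have : m - (N - 1 - k) = k + d := by omega
    rw [this, Polynomial.coeff_one_add_X_pow, mul_comm 2 k]
  have hcoeffQ : Q.coeff m = -1 := by
    have hAc : A.coeff m = 0 := by
      rw [hA, Polynomial.finset_sum_coeff]
      refine Finset.sum_eq_zero fun k _ => ?_
      rw [← pow_mul, hx, Polynomial.coeff_X_pow, if_neg (by omega)]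
    have hBc : (x * B).coeff m = 0 := by
      rw [hB, Finset.mul_sum, Polynomial.finset_sum_coeff]
      refine Finset.sum_eq_zero fun k _ => ?_
      rw [← pow_mul, hx, ← pow_succ', Polynomial.coeff_X_pow, if_neg (by omega)]
    have hCc : (x ^ (N + 1) * B).coeff m = 1 := by
      rw [hB, Finset.mul_sum, Polynomial.finset_sum_coeff]
      rw [Finset.sum_eq_single_of_mem s (Finset.mem_range.mpr hst)]
      · rw [← pow_mul, hx, ← pow_add, Polynomial.coeff_X_pow, if_pos (by omega)]
      · intro k _ hks
        rw [← pow_mul, hx, ← pow_add, Polynomial.coeff_X_pow, if_neg (by omega)]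
    rw [hQ, Polynomial.coeff_sub, Polynomial.coeff_sub, hAc, hBc, hCc]
    ring
  have key : ∑ n ∈ range N, ((2 * n).choose (n + d) : ZMod p) = -1 := by
    rw [← hcoeffP, hPQ, hcoeffQ]
  rw [← ZMod.intCast_eq_intCast_iff]
  push_cast
  exact key
end

section
/- For any prime p with p ≡ 1 (mod 3), any a ≥ 1, and any natural number d ≤ p^a with d ≡ 1 (mod 3), the sum ∑_{n=0}^{p^a - 1} C(2n, n+d) is congruent to 0 modulo p. -/
open Finset

/-- Pascal-type identity for central-ish binomials. -/
lemma pascal2 (n d : ℕ) :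
    (2*(n+1)).choose ((n+1)+(d+1)) =
      (2*n).choose (n+(d+2)) + 2*(2*n).choose (n+(d+1)) + (2*n).choose (n+d) := by
  have key : ∀ m k : ℕ, (m+1+1).choose (k+1+1) =
      m.choose k + 2 * m.choose (k+1) + m.choose (k+1+1) := by
    intro m k
    rw [Nat.choose_succ_succ (m+1) (k+1), Nat.choose_succ_succ m k,
      Nat.choose_succ_succ m (k+1)]
    ring
  have h1 : 2*(n+1) = 2*n+1+1 := by ring
  have h2 : (n+1)+(d+1) = (n+d)+1+1 := by ring
  rw [h1, h2, key (2*n) (n+d)]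
  have e1 : n+d+1 = n+(d+1) := by ring
  have e2 : n+d+1+1 = n+(d+2) := by ring
  rw [e2, e1]
  ring

/-- Key telescoping identity over ℤ. -/
lemma key_identity (N d : ℕ) :
    (∑ n ∈ range N, ((2*n).choose (n+d) : ℤ)) +
    (∑ n ∈ range N, ((2*n).choose (n+(d+1)) : ℤ)) +
    (∑ n ∈ range N, ((2*n).choose (n+(d+2)) : ℤ)) =
      ((2*N).choose (N+(d+1)) : ℤ) := by
  have tel : ∑ n ∈ range N,
      (((2*(n+1)).choose ((n+1)+(d+1)) : ℤ) - ((2*n).choose (n+(d+1)) : ℤ))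
      = ((2*N).choose (N+(d+1)) : ℤ) - ((2*0).choose (0+(d+1)) : ℤ) :=
    Finset.sum_range_sub (fun n => ((2*n).choose (n+(d+1)) : ℤ)) N
  have z : ((2*0).choose (0+(d+1)) : ℤ) = 0 := by simp
  rw [z, sub_zero] at tel
  rw [← tel, ← Finset.sum_add_distrib, ← Finset.sum_add_distrib]
  apply Finset.sum_congr rfl
  intro n _
  have := pascal2 n d
  push_cast [this]
  ring

/-- Lucas-type divisibility: `p ∣ C(2 p^a, p^a + e)` for `1 ≤ e < p^a`. -/
lemma lucas_div (p : ℕ) (hp : p.Prime) : ∀ a, 1 ≤ a → ∀ e, 1 ≤ e → e < p ^ a →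
    ((2 * p ^ a).choose (p ^ a + e) : ℤ) ≡ 0 [ZMOD (p : ℤ)] := by
  haveI : Fact p.Prime := ⟨hp⟩
  intro a
  induction a with
  | zero => omega
  | succ a ih =>
    intro _ e he1 he2
    have hpos : 0 < p := hp.pos
    have step := Choose.choose_modEq_choose_mod_mul_choose_div
      (n := 2 * p ^ (a+1)) (k := p ^ (a+1) + e) (p := p)
    have hmodn : (2 * p ^ (a+1)) % p = 0 := by
      have h : 2 * p ^ (a+1) = p * (2 * p ^ a) := by ring
      rw [h, Nat.mul_mod_right]
    have hmodk : (p ^ (a+1) + e) % p = e % p := by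
      have h : p ^ (a+1) + e = p * p ^ a + e := by ring
      rw [h, Nat.mul_add_mod]
    rw [hmodn, hmodk] at step
    by_cases h0 : e % p = 0
    · -- e divisible by p; reduce to smaller exponent
      rcases a.eq_zero_or_pos with rfl | hage
      · exfalso
        have : e % p = e := Nat.mod_eq_of_lt (by simpa using he2)
        omega
      have hdvd : p ∣ e := Nat.dvd_of_mod_eq_zero h0
      have hdivn : (2 * p ^ (a+1)) / p = 2 * p ^ a := by
        have h : 2 * p ^ (a+1) = (2 * p ^ a) * p := by ring
        rw [h, Nat.mul_div_cancel _ hpos]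
      have hdivk : (p ^ (a+1) + e) / p = p ^ a + e / p := by
        rcases hdvd with ⟨c, rfl⟩
        rw [Nat.mul_div_cancel_left _ hpos]
        have h : p ^ (a+1) + p * c = (p ^ a + c) * p := by ring
        rw [h, Nat.mul_div_cancel _ hpos]
      rw [hdivn, hdivk, h0] at step
      have hc1 : 1 ≤ e / p := Nat.one_le_div_iff hpos |>.mpr (Nat.le_of_dvd (by omega) hdvd)
      have hc2 : e / p < p ^ a := by
        rw [Nat.div_lt_iff_lt_mul hpos]
        calc e < p ^ (a+1) := he2
        _ = p ^ a * p := by rw [pow_succ]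
      have := ih hage (e / p) hc1 hc2
      calc ((2 * p ^ (a+1)).choose (p ^ (a+1) + e) : ℤ)
          ≡ (Nat.choose 0 0 : ℕ) * ((2 * p ^ a).choose (p ^ a + e / p) : ℕ) [ZMOD (p:ℤ)] := step
        _ ≡ 0 [ZMOD (p:ℤ)] := by
            simpa using (Int.ModEq.mul_left 1 this)
    · -- low digit of k is nonzero, of n is zero
      have : (Nat.choose 0 (e % p) : ℤ) = 0 := by
        rw [Nat.choose_eq_zero_of_lt (by omega)]; simp
      calc ((2 * p ^ (a+1)).choose (p ^ (a+1) + e) : ℤ)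
          ≡ (Nat.choose 0 (e % p) : ℕ) * ((2 * p ^ (a+1) / p).choose ((p ^ (a+1) + e) / p) : ℕ)
            [ZMOD (p:ℤ)] := step
        _ ≡ 0 [ZMOD (p:ℤ)] := by
            rw [this, zero_mul]

theorem stmt5 (p a d : ℕ) (hp : p.Prime) (h3 : p % 3 = 1) (ha : 1 ≤ a)
    (hd : d ≤ p ^ a) (hd3 : d % 3 = 1) :
    (∑ n ∈ Finset.range (p^a), ((2*n).choose (n + d) : ℤ)) ≡ 0 [ZMOD (p : ℤ)] := by
  set N := p ^ a with hN
  -- S (p^a) = 0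
  have Shigh : (∑ n ∈ range N, ((2*n).choose (n + N) : ℤ)) = 0 := by
    apply Finset.sum_eq_zero
    intro n hn
    rw [mem_range] at hn
    rw [Nat.choose_eq_zero_of_lt (by omega)]
    simp
  -- step lemma: S e ≡ S (e+3) for e + 3 ≤ N
  have hstep : ∀ e, e + 3 ≤ N →
      (∑ n ∈ range N, ((2*n).choose (n + e) : ℤ)) ≡
      (∑ n ∈ range N, ((2*n).choose (n + (e+3)) : ℤ)) [ZMOD (p:ℤ)] := by
    intro e he
    have k1 := key_identity N e
    have k2 := key_identity N (e+1)
    have d1 := lucas_div p hp a ha (e+1) (by omega) (by omega)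
    have d2 := lucas_div p hp a ha (e+2) (by omega) (by omega)
    have h1 : ((2*N).choose (N+(e+1)) : ℤ) ≡ 0 [ZMOD (p:ℤ)] := by
      have : N + (e+1) = N + (e+1) := rfl
      simpa [two_mul, hN, mul_comm] using d1
    have h2 : ((2*N).choose (N+(e+1+1)) : ℤ) ≡ 0 [ZMOD (p:ℤ)] := by
      have e2 : N + (e+1+1) = N + (e+2) := by ring
      rw [e2]
      simpa [two_mul, hN, mul_comm] using d2
    have e3 : e + 1 + 2 = e + 3 := by ring
    have e4 : e + 1 + 1 = e + 2 := by ring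
    rw [e3, e4] at k2
    -- k1 : S e + S (e+1) + S (e+2) = C1 ≡ 0, k2 : S (e+1) + S (e+2) + S (e+3) = C2 ≡ 0
    have := (h1.sub h2)
    rw [← k1, ← k2] at this
    have heq : ((∑ n ∈ range N, ((2*n).choose (n+e) : ℤ)) +
        (∑ n ∈ range N, ((2*n).choose (n+(e+1)) : ℤ)) +
        (∑ n ∈ range N, ((2*n).choose (n+(e+2)) : ℤ))) -
        ((∑ n ∈ range N, ((2*n).choose (n+(e+1)) : ℤ)) +
        (∑ n ∈ range N, ((2*n).choose (n+(e+2)) : ℤ)) +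
        (∑ n ∈ range N, ((2*n).choose (n+(e+3)) : ℤ)))
        = (∑ n ∈ range N, ((2*n).choose (n+e) : ℤ)) -
          (∑ n ∈ range N, ((2*n).choose (n+(e+3)) : ℤ)) := by ring
    rw [heq] at this
    have h := Int.ModEq.add_right (∑ n ∈ range N, ((2*n).choose (n+(e+3)) : ℤ)) this
    simpa using h
  have hN3 : N % 3 = 1 := by
    rw [hN, Nat.pow_mod, h3]
    simp [Nat.one_pow]
  have main : ∀ j e, e + 3*j = N →
      (∑ n ∈ range N, ((2*n).choose (n + e) : ℤ)) ≡ 0 [ZMOD (p:ℤ)] := by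
    intro j
    induction j with
    | zero =>
      intro e he
      have : e = N := by omega
      subst this
      rw [Shigh]
    | succ j ih =>
      intro e he
      exact (hstep e (by omega)).trans (ih (e+3) (by omega))
  obtain ⟨j, hj⟩ : 3 ∣ N - d := by omega
  exact main j d (by omega)
end

section
/- For any prime p with p ≡ 2 (mod 3) and any even a ≥ 1, and any natural number d ≤ p^a with d ≡ 2 (mod 3), the sum ∑_{n=0}^{p^a - 1} C(2n, n+d) is congruent to -1 modulo p. -/
open Finset Polynomial

/-- Coefficients of `1/(1+x+x²)` as a power series: period-3 pattern `1, -1, 0`. -/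
def cc (j : ℕ) : ℤ := if j % 3 = 0 then 1 else if j % 3 = 1 then -1 else 0

lemma cc_sum (j : ℕ) : cc j + cc (j+1) + cc (j+2) = 0 := by
  unfold cc
  have h : j % 3 = 0 ∨ j % 3 = 1 ∨ j % 3 = 2 := by omega
  have h1 : (j+1) % 3 = (j % 3 + 1) % 3 := by omega
  have h2 : (j+2) % 3 = (j % 3 + 2) % 3 := by omega
  rcases h with h | h | h <;> rw [h1, h2, h] <;> norm_num

/-- Partial convolution of `cc` with binomial coefficients of `(1+x)^M`. -/
def AA (M m : ℕ) : ℤ := ∑ i ∈ range (m+1), cc (m - i) * (M.choose i : ℤ)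

lemma AA_pascal (M m : ℕ) : AA (M+1) (m+1) = AA M (m+1) + AA M m := by
  unfold AA
  rw [Finset.sum_range_succ' (fun i => cc (m+1-i) * ((M+1).choose i : ℤ)) (m+1),
      Finset.sum_range_succ' (fun i => cc (m+1-i) * ((M).choose i : ℤ)) (m+1)]
  simp only [Nat.succ_sub_succ, Nat.choose_succ_succ, Nat.choose_zero_right,
    Nat.sub_zero, Nat.cast_add, Nat.cast_one, mul_add]
  rw [Finset.sum_add_distrib]
  ring

lemma AA_three (M k : ℕ) : AA M (k+2) + AA M (k+1) + AA M k = (M.choose (k+2) : ℤ) := by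
  have e1 : AA M (k+2) = (∑ i ∈ range (k+1), cc (k-i+2) * (M.choose i : ℤ))
      + (-1) * (M.choose (k+1) : ℤ) + (M.choose (k+2) : ℤ) := by
    unfold AA
    rw [Finset.sum_range_succ, Finset.sum_range_succ,
      Finset.sum_congr rfl (fun i hi => by
        simp only [mem_range] at hi
        rw [show k+2-i = k-i+2 by omega])]
    rw [show k+2-(k+2) = 0 by omega, show k+2-(k+1) = 1 by omega]
    norm_num [cc]
  have e2 : AA M (k+1) = (∑ i ∈ range (k+1), cc (k-i+1) * (M.choose i : ℤ))
      + (M.choose (k+1) : ℤ) := by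
    unfold AA
    rw [Finset.sum_range_succ,
      Finset.sum_congr rfl (fun i hi => by
        simp only [mem_range] at hi
        rw [show k+1-i = k-i+1 by omega])]
    rw [show k+1-(k+1) = 0 by omega]
    norm_num [cc]
  have e3 : ∑ i ∈ range (k+1),
      (cc (k-i) + cc (k-i+1) + cc (k-i+2)) * (M.choose i : ℤ) = 0 :=
    Finset.sum_eq_zero (fun i _ => by rw [cc_sum]; ring)
  simp only [add_mul, Finset.sum_add_distrib] at e3
  have e0 : AA M k = ∑ i ∈ range (k+1), cc (k-i) * (M.choose i : ℤ) := rfl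
  rw [e0, e1, e2]
  linarith [e3]

lemma key (e N : ℕ) :
    (∑ n ∈ range N, ((2*n).choose (n+(e+2)) : ℤ)) = AA (2*N) (N+e+1) - cc (e+1) := by
  induction N with
  | zero =>
    simp only [range_zero, sum_empty, Nat.mul_zero, Nat.zero_add]
    unfold AA
    rw [Finset.sum_range_succ' (fun i => cc (e+1-i) * ((0:ℕ).choose i : ℤ)) (e+1)]
    have : ∀ i ∈ range (e+1), cc (e+1-(i+1)) * (((0:ℕ).choose (i+1)) : ℤ) = 0 := by
      intro i _
      rw [Nat.choose_eq_zero_of_lt (by omega)]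
      simp
    rw [Finset.sum_congr rfl this]
    simp
  | succ N ih =>
    rw [Finset.sum_range_succ, ih]
    have h1 : AA (2*N+1+1) (N+e+1+1) = AA (2*N+1) (N+e+1+1) + AA (2*N+1) (N+e+1) :=
      AA_pascal (2*N+1) (N+e+1)
    have h2 : AA (2*N+1) (N+e+1+1) = AA (2*N) (N+e+1+1) + AA (2*N) (N+e+1) :=
      AA_pascal (2*N) (N+e+1)
    have h3 : AA (2*N+1) (N+e+1) = AA (2*N) (N+e+1) + AA (2*N) (N+e) :=
      AA_pascal (2*N) (N+e)
    have h4 : AA (2*N) (N+e+2) + AA (2*N) (N+e+1) + AA (2*N) (N+e)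
        = ((2*N).choose (N+e+2) : ℤ) := AA_three (2*N) (N+e)
    have hc : 2*(N+1) = 2*N+1+1 := by ring
    have hm : (N+1)+e+1 = N+e+1+1 := by ring
    have hn : N+(e+2) = N+e+2 := by ring
    have hm2 : N+e+1+1 = N+e+2 := by ring
    rw [hc, hm, hn, h1, h2, h3, hm2]
    linarith [h4]

lemma choose_pow (p a : ℕ) (hp : p.Prime) (i : ℕ) :
    ((2*(p^a)).choose i : ZMod p)
      = (if i = 0 then 1 else 0) + 2 * (if i = p^a then 1 else 0)
        + (if i = 2*p^a then 1 else 0) := by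
  haveI : Fact p.Prime := ⟨hp⟩
  have h1 : ((X + 1 : (ZMod p)[X]))^(p^a) = X^(p^a) + 1 := by
    rw [add_pow_char_pow]
    simp
  have h2 : ((X + 1 : (ZMod p)[X]))^(2*p^a)
      = X^(2*p^a) + (X^(p^a) + X^(p^a)) + 1 := by
    rw [show 2*p^a = p^a*2 by ring, pow_mul, h1, add_sq, ← pow_mul,
      show p^a*2 = 2*p^a by ring]
    ring
  have := coeff_X_add_one_pow (ZMod p) (2*p^a) i
  rw [h2] at this
  rw [← this]
  simp only [coeff_add, coeff_X_pow, coeff_one]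
  ring

theorem stmt7 (p a d : ℕ) (hp : p.Prime) (h3 : p % 3 = 2) (ha : 1 ≤ a) (heven : Even a)
    (hd : d ≤ p ^ a) (hd3 : d % 3 = 2) :
    (∑ n ∈ Finset.range (p^a), ((2*n).choose (n + d) : ℤ)) ≡ -1 [ZMOD (p : ℤ)] := by
  haveI : Fact p.Prime := ⟨hp⟩
  obtain ⟨e, rfl⟩ : ∃ e, d = e + 2 := ⟨d - 2, by omega⟩
  have hN3 : p^a % 3 = 1 := by
    obtain ⟨b, rfl⟩ := heven
    rw [Nat.pow_mod, h3, show b+b = 2*b by ring, pow_mul, Nat.pow_mod]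
    norm_num
  have he3 : e % 3 = 0 := by omega
  have hkey := key e (p^a)
  rw [show (∑ n ∈ Finset.range (p^a), ((2*n).choose (n + (e+2)) : ℤ))
      = AA (2*(p^a)) (p^a+e+1) - cc (e+1) from hkey]
  have hcc1 : cc (e+1) = -1 := by
    unfold cc
    rw [show (e+1) % 3 = 1 by omega]
    norm_num
  have hAA : ((AA (2*(p^a)) (p^a+e+1) : ℤ) : ZMod p) = -2 := by
    unfold AA
    push_cast
    rw [Finset.sum_congr rfl (fun i _ => by rw [choose_pow p a hp i])]
    simp only [mul_add, mul_ite, mul_one, mul_zero, Finset.sum_add_distrib,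
      Finset.sum_ite_eq' (range (p^a+e+1+1)), mem_range]
    rw [if_pos (by omega), if_pos (by omega), if_neg (by omega)]
    rw [show p^a+e+1-0 = p^a+e+1 by omega, show p^a+e+1-p^a = e+1 by omega]
    rw [show cc (p^a+e+1) = 0 by unfold cc; rw [show (p^a+e+1) % 3 = 2 by omega]; norm_num,
      hcc1]
    push_cast
    ring
  rw [show ((p:ℤ)) = ((p:ℕ):ℤ) from rfl, ← ZMod.intCast_eq_intCast_iff]
  rw [Int.cast_sub, hAA, hcc1]
  push_cast
  ring
end

section
/- For any prime p with p ≡ 1 (mod 3) and any a ≥ 1, the sum ∑_{n=0}^{2p^a - 1} C(2n, n) is congruent to 3 modulo p. -/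
open Finset

section aux
variable (p : ℕ) [hp : Fact p.Prime]

lemma stmt8_key_binom (hodd : p % 2 = 1) {k : ℕ} (hk : k ≤ p / 2) :
    (((2*k).choose k : ℕ) : ZMod p) = (-4)^k * (((p/2).choose k : ℕ) : ZMod p) := by
  induction k with
  | zero => simp
  | succ k ih =>
    have hk' : k ≤ p / 2 := by omega
    have ih := ih hk'
    have hp2 : 2 ≤ p := hp.out.two_le
    have h1 : ((k:ZMod p) + 1) ≠ 0 := by
      have h : (((k+1 : ℕ)) : ZMod p) ≠ 0 := by
        rw [Ne, ZMod.natCast_eq_zero_iff]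
        intro h
        have := Nat.le_of_dvd (by omega) h
        omega
      simpa using h
    apply mul_left_cancel₀ h1
    have nat1 : (k + 1) * ((2*(k+1)).choose (k+1)) = 2 * (2*k+1) * ((2*k).choose k) :=
      Nat.succ_mul_centralBinom_succ k
    have nat2 : (p/2).choose (k+1) * (k+1) = (p/2).choose k * (p/2 - k) :=
      Nat.choose_succ_right_eq _ _
    have hc : 2 * (p/2 - k) + 2*k + 1 = p := by omega
    have hcast : (2 : ZMod p) * ((p/2 - k : ℕ) : ZMod p) = -(2*(k:ZMod p)+1) := by
      have h0 : ((2 * (p/2 - k) + 2*k + 1 : ℕ) : ZMod p) = 0 := by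
        rw [hc]; exact ZMod.natCast_self p
      push_cast at h0
      linear_combination h0
    have c1 : ((k:ZMod p)+1) * (((2*(k+1)).choose (k+1) : ℕ) : ZMod p)
        = 2 * (2*(k:ZMod p)+1) * (((2*k).choose k : ℕ) : ZMod p) := by
      have h := congrArg (Nat.cast : ℕ → ZMod p) nat1
      push_cast at h
      linear_combination h
    have c2 : (((p/2).choose (k+1) : ℕ) : ZMod p) * ((k:ZMod p)+1)
        = (((p/2).choose k : ℕ) : ZMod p) * ((p/2 - k : ℕ) : ZMod p) := by
      have h := congrArg (Nat.cast : ℕ → ZMod p) nat2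
      push_cast at h
      linear_combination h
    linear_combination c1 + 2*(2*(k:ZMod p)+1)*ih + (4*(-4:ZMod p)^k)*c2
      + 2*(-4:ZMod p)^k*((((p/2).choose k : ℕ)) : ZMod p)*hcast

lemma stmt8_half_sum (hodd : p % 2 = 1) :
    (∑ r ∈ Finset.range (p/2 + 1), (((2*r).choose r : ℕ) : ZMod p)) = (-3)^(p/2) := by
  have h : (∑ r ∈ Finset.range (p/2 + 1), (((2*r).choose r : ℕ) : ZMod p))
      = ∑ r ∈ Finset.range (p/2 + 1), (-4:ZMod p)^r * 1^(p/2 - r) * ((p/2).choose r : ℕ) := by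
    refine Finset.sum_congr rfl fun r hr => ?_
    rw [stmt8_key_binom p hodd (Nat.lt_succ_iff.mp (Finset.mem_range.mp hr))]
    ring
  rw [h, ← add_pow (-4 : ZMod p) 1 (p/2)]
  norm_num

lemma stmt8_neg_three_pow (h3 : p % 3 = 1) : ((-3 : ZMod p))^(p/2) = 1 := by
  have hp2 : 2 ≤ p := hp.out.two_le
  have hp7 : 4 ≤ p := by
    rcases Nat.lt_or_ge p 4 with h | h
    · interval_cases p <;> omega
    · exact h
  obtain ⟨g, hg⟩ := IsCyclic.exists_generator (α := (ZMod p)ˣ)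
  have hord : orderOf g = p - 1 := by
    rw [orderOf_eq_card_of_forall_mem_zpowers hg, Nat.card_eq_fintype_card, ZMod.card_units]
  have h3dvd : 3 ∣ p - 1 := by omega
  have hord3 : orderOf (g ^ ((p-1)/3)) = 3 := by
    rw [← hord] at h3dvd ⊢
    exact orderOf_pow_orderOf_div (by rw [hord]; omega) h3dvd
  set u := g ^ ((p-1)/3) with hu
  have hu3 : (u : ZMod p)^3 = 1 := by
    have h := pow_orderOf_eq_one u
    rw [hord3] at h
    rw [← Units.val_pow_eq_pow_val, h, Units.val_one]
  have hune : (u : ZMod p) ≠ 1 := by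
    intro h
    have : u = 1 := Units.ext h
    rw [this] at hord3
    simp at hord3
  set ω : ZMod p := (u : ZMod p) with hω
  have hsum : ω^2 + ω + 1 = 0 := by
    have hfac : (ω - 1) * (ω^2 + ω + 1) = 0 := by linear_combination hu3
    rcases mul_eq_zero.mp hfac with h | h
    · exact absurd (by linear_combination h) hune
    · exact h
  have hsq : IsSquare (-3 : ZMod p) := ⟨2*ω+1, by linear_combination -4*hsum⟩
  have hne : (-3 : ZMod p) ≠ 0 := by
    intro h
    have h3' : ((3:ℕ) : ZMod p) = 0 := by push_cast; linear_combination -h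
    rw [ZMod.natCast_eq_zero_iff] at h3'
    have := Nat.le_of_dvd (by norm_num) h3'
    omega
  exact (ZMod.euler_criterion p hne).mp hsq

lemma stmt8_lucas_term (q r : ℕ) (hr : r < p) :
    (((2*(p*q+r)).choose (p*q+r) : ℕ) : ZMod p)
      = (((2*r % p).choose r : ℕ) : ZMod p) * (((2*r/p + 2*q).choose q : ℕ) : ZMod p) := by
  have h := Choose.choose_modEq_choose_mod_mul_choose_div
    (p := p) (n := 2*(p*q+r)) (k := p*q+r)
  have e1 : 2*(p*q+r) % p = 2*r % p := by
    have h2 : 2*(p*q+r) = 2*r + p*(2*q) := by ring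
    rw [h2, Nat.add_mul_mod_self_left]
  have e2 : 2*(p*q+r) / p = 2*r/p + 2*q := by
    have h2 : 2*(p*q+r) = 2*r + p*(2*q) := by ring
    rw [h2, Nat.add_mul_div_left _ _ (show 0 < p by omega)]
  have e3 : (p*q+r) % p = r := by
    rw [Nat.mul_add_mod, Nat.mod_eq_of_lt hr]
  have e4 : (p*q+r) / p = q := by
    rw [Nat.mul_add_div (show 0 < p by omega), Nat.div_eq_of_lt hr, Nat.add_zero]
  rw [e1, e2, e3, e4] at h
  have h' := (ZMod.intCast_eq_intCast_iff _ _ _).mpr h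
  push_cast at h'
  exact_mod_cast h'

lemma stmt8_inner_sum (hodd : p % 2 = 1) (q : ℕ) :
    (∑ r ∈ Finset.range p, (((2*(p*q+r)).choose (p*q+r) : ℕ) : ZMod p))
      = (((2*q).choose q : ℕ) : ZMod p)
        * ∑ r ∈ Finset.range (p/2 + 1), (((2*r).choose r : ℕ) : ZMod p) := by
  have hp2 : 2 ≤ p := hp.out.two_le
  have hsplit : Finset.range p = Finset.range (p/2+1) ∪ Finset.Ico (p/2+1) p := by
    rw [Finset.range_eq_Ico, Finset.range_eq_Ico]
    exact (Finset.Ico_union_Ico_eq_Ico (by omega : 0 ≤ p/2+1) (by omega : p/2+1 ≤ p)).symm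
  rw [hsplit, Finset.sum_union (by
    rw [Finset.range_eq_Ico]
    exact Finset.Ico_disjoint_Ico_consecutive 0 (p/2+1) p)]
  have h2 : (∑ r ∈ Finset.Ico (p/2+1) p, (((2*(p*q+r)).choose (p*q+r) : ℕ) : ZMod p)) = 0 := by
    refine Finset.sum_eq_zero fun r hr => ?_
    obtain ⟨hr1, hr2⟩ := Finset.mem_Ico.mp hr
    rw [stmt8_lucas_term p q r hr2]
    have hm : 2*r % p = 2*r - p := by
      rw [Nat.mod_eq_sub_mod (by omega), Nat.mod_eq_of_lt (by omega)]
    have hz : ((2*r % p).choose r) = 0 := by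
      rw [hm]; exact Nat.choose_eq_zero_of_lt (by omega)
    rw [hz]
    simp
  rw [h2, add_zero, Finset.mul_sum]
  refine Finset.sum_congr rfl fun r hr => ?_
  have hr' : r ≤ p/2 := Nat.lt_succ_iff.mp (Finset.mem_range.mp hr)
  rw [stmt8_lucas_term p q r (by omega)]
  have hm : 2*r % p = 2*r := Nat.mod_eq_of_lt (by omega)
  have hd : 2*r / p = 0 := Nat.div_eq_of_lt (by omega)
  rw [hm, hd, Nat.zero_add]
  ring

lemma stmt8_sum_step (hodd : p % 2 = 1) (N : ℕ) :
    (∑ n ∈ Finset.range (p*N), (((2*n).choose n : ℕ) : ZMod p))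
      = (∑ n ∈ Finset.range N, (((2*n).choose n : ℕ) : ZMod p))
        * ∑ r ∈ Finset.range (p/2 + 1), (((2*r).choose r : ℕ) : ZMod p) := by
  induction N with
  | zero => simp
  | succ N ih =>
    have hpn : p * (N+1) = p*N + p := by ring
    rw [hpn, Finset.sum_range_add, ih, stmt8_inner_sum p hodd N,
      Finset.sum_range_succ _ N, add_mul]

lemma stmt8_zmod_sum (h3 : p % 3 = 1) (a : ℕ) :
    (∑ n ∈ Finset.range (2 * p^a), (((2*n).choose n : ℕ) : ZMod p)) = 3 := by
  have hp2 : 2 ≤ p := hp.out.two_le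
  have hodd : p % 2 = 1 := by
    rcases hp.out.eq_two_or_odd with h | h
    · omega
    · exact h
  induction a with
  | zero =>
    rw [pow_zero, mul_one, Finset.sum_range_succ, Finset.sum_range_one]
    norm_num
  | succ a ih =>
    have hS : (∑ r ∈ Finset.range (p/2 + 1), (((2*r).choose r : ℕ) : ZMod p)) = 1 := by
      rw [stmt8_half_sum p hodd, stmt8_neg_three_pow p h3]
    have hpn : 2 * p^(a+1) = p * (2 * p^a) := by ring
    rw [hpn, stmt8_sum_step p hodd, ih, hS, mul_one]

end aux

theorem stmt8 (p a : ℕ) (hp : p.Prime) (h3 : p % 3 = 1) (ha : 1 ≤ a) :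
    (∑ n ∈ Finset.range (2 * p^a), ((2*n).choose n : ℤ)) ≡ 3 [ZMOD (p : ℤ)] := by
  haveI : Fact p.Prime := ⟨hp⟩
  have h := stmt8_zmod_sum p h3 a
  rw [← ZMod.intCast_eq_intCast_iff]
  push_cast
  exact_mod_cast h
end

section
/- For any prime p > 3 with p ≡ 1 (mod 3), and any a ≥ 1, the sum of the Catalan numbers ∑_{n=0}^{p^a - 1} C_n is congruent to 1 modulo p. -/
open Finset Nat

section Aux

variable (p : ℕ) [hpf : Fact p.Prime]

/-- Lucas corollary for central binomial coefficients. -/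
lemma lucas_cb (N r : ℕ) (hr : r < p) :
    ((p * N + r).centralBinom : ZMod p)
      = (r.centralBinom : ZMod p) * (N.centralBinom : ZMod p) := by
  have hp := hpf.out
  have hp0 : 0 < p := hp.pos
  unfold Nat.centralBinom
  have key := (ZMod.intCast_eq_intCast_iff _ _ p).mpr
    (Choose.choose_modEq_choose_mod_mul_choose_div (p := p)
      (n := 2 * (p * N + r)) (k := p * N + r))
  push_cast at key
  rw [key]
  have hk : p * N + r = r + p * N := by ring
  by_cases h2r : 2 * r < p
  · have hn : 2 * (p * N + r) = 2 * r + p * (2 * N) := by ring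
    rw [hn, hk, Nat.add_mul_mod_self_left, Nat.add_mul_div_left _ _ hp0,
      Nat.add_mul_mod_self_left, Nat.add_mul_div_left _ _ hp0,
      Nat.mod_eq_of_lt h2r, Nat.mod_eq_of_lt hr, Nat.div_eq_of_lt h2r, Nat.div_eq_of_lt hr]
    ring
  · have he : p * (2 * N + 1) = 2 * (p * N) + p := by ring
    have hn : 2 * (p * N + r) = (2 * r - p) + p * (2 * N + 1) := by omega
    rw [hn, hk, Nat.add_mul_mod_self_left, Nat.add_mul_div_left _ _ hp0,
      Nat.add_mul_mod_self_left, Nat.add_mul_div_left _ _ hp0,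
      Nat.mod_eq_of_lt (show 2 * r - p < p by omega), Nat.mod_eq_of_lt hr,
      Nat.div_eq_of_lt (show 2 * r - p < p by omega), Nat.div_eq_of_lt hr]
    have hz1 : (2 * r - p).choose r = 0 := Nat.choose_eq_zero_of_lt (by omega)
    have hz2 : ((2 * r).choose r : ZMod p) = 0 := by
      rw [ZMod.natCast_eq_zero_iff]
      have := hp.dvd_choose_add (a := r) (b := r) hr hr (by omega)
      rwa [two_mul]
    rw [hz1, hz2]
    simp

lemma cb_eq_pow (m : ℕ) (hm : p = 2 * m + 1) :
    ∀ r, r ≤ m → ((r.centralBinom : ZMod p)) = (-4) ^ r * (m.choose r : ZMod p) := by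
  have hzero : 2 * (m : ZMod p) + 1 = 0 := by
    have h : ((2 * m + 1 : ℕ) : ZMod p) = 0 := by rw [← hm]; exact ZMod.natCast_self p
    push_cast at h
    linear_combination h
  intro r
  induction r with
  | zero => simp [Nat.centralBinom]
  | succ r ih =>
    intro hr
    have hr' : r ≤ m := le_of_succ_le hr
    have hrp : ((r : ZMod p) + 1) ≠ 0 := by
      intro h
      have h' : ((r + 1 : ℕ) : ZMod p) = 0 := by push_cast; linear_combination h
      rw [ZMod.natCast_eq_zero_iff] at h'
      have := Nat.le_of_dvd (by omega) h'
      omega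
    have h1 : ((r : ZMod p) + 1) * ((r + 1).centralBinom : ZMod p)
        = 2 * (2 * (r : ZMod p) + 1) * (r.centralBinom : ZMod p) := by
      have := congrArg (Nat.cast (R := ZMod p)) (Nat.succ_mul_centralBinom_succ r)
      push_cast at this
      linear_combination this
    have h2n : (m.choose (r + 1) : ZMod p) * ((r : ZMod p) + 1)
        = (m.choose r : ZMod p) * ((m : ZMod p) - r) := by
      have := congrArg (Nat.cast (R := ZMod p)) (Nat.choose_succ_right_eq m r)
      push_cast [Nat.cast_sub hr'] at this
      linear_combination this
    apply mul_left_cancel₀ hrp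
    rw [h1, ih hr']
    linear_combination 4 * ((-4 : ZMod p)) ^ r * h2n
      + 2 * ((-4 : ZMod p)) ^ r * (m.choose r : ZMod p) * hzero

lemma sum_cb_range_p (m : ℕ) (hm : p = 2 * m + 1) (h3 : p % 3 = 1) (hp3 : 3 < p) :
    ∑ r ∈ range p, (r.centralBinom : ZMod p) = 1 := by
  have hp := hpf.out
  -- only terms with r ≤ m survive
  have hsub : ∑ r ∈ range (m + 1), (r.centralBinom : ZMod p)
      = ∑ r ∈ range p, (r.centralBinom : ZMod p) := by
    apply Finset.sum_subset (Finset.range_subset_range.mpr (by omega))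
    intro x hx hx'
    rw [Finset.mem_range] at hx hx'
    rw [ZMod.natCast_eq_zero_iff]
    have := hp.dvd_choose_add (a := x) (b := x) hx hx (by omega)
    unfold Nat.centralBinom
    rwa [two_mul]
  rw [← hsub]
  have : ∑ r ∈ range (m + 1), (r.centralBinom : ZMod p)
      = ∑ r ∈ range (m + 1), (-4 : ZMod p) ^ r * (m.choose r : ZMod p) :=
    Finset.sum_congr rfl fun r hr => cb_eq_pow p m hm r (by
      have := Finset.mem_range.mp hr; omega)
  rw [this]
  have hpow : ((-4 : ZMod p) + 1) ^ m
      = ∑ r ∈ range (m + 1), (-4 : ZMod p) ^ r * (m.choose r : ZMod p) := by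
    rw [add_pow]
    exact Finset.sum_congr rfl fun r _ => by rw [one_pow, mul_one]
  rw [← hpow]
  have hm3 : ((-4 : ZMod p) + 1) = -3 := by ring
  rw [hm3]
  -- (-3)^m = 1 since -3 is a square (via a cube root of unity) and 2m = p - 1
  haveI : Fact (Nat.Prime 3) := ⟨by norm_num⟩
  have hcard : 3 ∣ Fintype.card (ZMod p)ˣ := by
    rw [ZMod.card_units_eq_totient, Nat.totient_prime hp]
    omega
  obtain ⟨u, hu⟩ := exists_prime_orderOf_dvd_card 3 hcard
  set ω : ZMod p := (u : ZMod p) with hω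
  have hω3 : ω ^ 3 = 1 := by
    have h := pow_orderOf_eq_one u
    rw [hu] at h
    calc ω ^ 3 = ((u ^ 3 : (ZMod p)ˣ) : ZMod p) := (Units.val_pow_eq_pow_val u 3).symm
      _ = ((1 : (ZMod p)ˣ) : ZMod p) := by rw [h]
      _ = 1 := Units.val_one
  have hω1 : ω ≠ 1 := by
    intro h
    have hu1 : u = 1 := Units.ext h
    rw [hu1, orderOf_one] at hu
    omega
  have hsum : ω ^ 2 + ω + 1 = 0 := by
    have h : (ω - 1) * (ω ^ 2 + ω + 1) = 0 := by linear_combination hω3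
    rcases mul_eq_zero.mp h with h' | h'
    · exact absurd (sub_eq_zero.mp h') hω1
    · exact h'
  have hsq : (2 * ω + 1) ^ 2 = -3 := by linear_combination 4 * hsum
  have hne : (2 * ω + 1) ≠ 0 := by
    intro h
    have h3z : ((3 : ℕ) : ZMod p) = 0 := by
      push_cast
      linear_combination hsq - (2 * ω + 1) * h
    rw [ZMod.natCast_eq_zero_iff] at h3z
    have := Nat.le_of_dvd (by norm_num) h3z
    omega
  calc (-3 : ZMod p) ^ m = ((2 * ω + 1) ^ 2) ^ m := by rw [hsq]
    _ = (2 * ω + 1) ^ (p - 1) := by rw [← pow_mul]; congr 1; omega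
    _ = 1 := ZMod.pow_card_sub_one_eq_one hne

lemma sum_cb_mul (hT : ∑ r ∈ range p, (r.centralBinom : ZMod p) = 1) :
    ∀ N : ℕ, ∑ n ∈ range (p * N), (n.centralBinom : ZMod p)
      = ∑ n ∈ range N, (n.centralBinom : ZMod p) := by
  intro N
  induction N with
  | zero => simp
  | succ N ih =>
    rw [show p * (N + 1) = p * N + p from by ring, Finset.sum_range_add, ih,
      Finset.sum_range_succ]
    congr 1
    have h : ∀ x ∈ range p, ((p * N + x).centralBinom : ZMod p)
        = (x.centralBinom : ZMod p) * (N.centralBinom : ZMod p) :=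
      fun x hx => lucas_cb p N x (Finset.mem_range.mp hx)
    rw [Finset.sum_congr rfl h, ← Finset.sum_mul, hT, one_mul]

end Aux

theorem stmt12 (p a : ℕ) (hp : p.Prime) (hp3 : 3 < p) (h3 : p % 3 = 1) (ha : 1 ≤ a) :
    (∑ n ∈ Finset.range (p^a), (catalan n : ℤ)) ≡ 1 [ZMOD (p : ℤ)] := by
  haveI : Fact p.Prime := ⟨hp⟩
  have hodd : p % 2 = 1 := by
    rcases hp.eq_two_or_odd with h | h
    · omega
    · exact h
  set m := p / 2 with hmdef
  have hm : p = 2 * m + 1 := by omega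
  have hT : ∑ r ∈ range p, (r.centralBinom : ZMod p) = 1 := sum_cb_range_p p m hm h3 hp3
  -- sum of central binomials over range (p^b) is 1
  have hS : ∀ b : ℕ, ∑ n ∈ range (p ^ b), (n.centralBinom : ZMod p) = 1 := by
    intro b
    induction b with
    | zero => simp [Nat.centralBinom]
    | succ b ih => rw [pow_succ, mul_comm, sum_cb_mul p hT, ih]
  -- central binomial at p^b (b ≥ 1) is 2
  have hB : ∀ b : ℕ, ((p ^ (b + 1)).centralBinom : ZMod p) = 2 := by
    intro b
    induction b with
    | zero =>
      have h0 := lucas_cb p 1 0 hp.pos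
      simp only [mul_one, add_zero] at h0
      rw [zero_add, pow_one, h0]
      norm_num [Nat.centralBinom, Nat.choose]
    | succ b ih =>
      have := lucas_cb p (p ^ (b + 1)) 0 hp.pos
      rw [show p * p ^ (b + 1) + 0 = p ^ (b + 2) from by ring] at this
      rw [this]
      simp only [Nat.centralBinom_zero, Nat.cast_one, one_mul]
      exact ih
  -- key identity: 2 * catalan n + centralBinom (n+1) = 4 * centralBinom n
  have keyN : ∀ n : ℕ, 2 * catalan n + (n + 1).centralBinom = 4 * n.centralBinom := by
    intro n
    apply Nat.eq_of_mul_eq_mul_left (show 0 < n + 1 by omega)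
    calc (n + 1) * (2 * catalan n + (n + 1).centralBinom)
        = 2 * ((n + 1) * catalan n) + (n + 1) * (n + 1).centralBinom := by ring
      _ = 2 * n.centralBinom + 2 * (2 * n + 1) * n.centralBinom := by
          rw [succ_mul_catalan_eq_centralBinom, Nat.succ_mul_centralBinom_succ]
      _ = (n + 1) * (4 * n.centralBinom) := by ring
  have key : ∀ n : ℕ, 2 * (catalan n : ZMod p) + ((n + 1).centralBinom : ZMod p)
      = 4 * (n.centralBinom : ZMod p) := by
    intro n
    have := congrArg (Nat.cast (R := ZMod p)) (keyN n)
    push_cast at this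
    linear_combination this
  rw [← ZMod.intCast_eq_intCast_iff]
  push_cast
  -- goal: ∑ n in range (p^a), (catalan n : ZMod p) = 1
  have h2ne : (2 : ZMod p) ≠ 0 := by
    intro h
    have h' : ((2 : ℕ) : ZMod p) = 0 := by push_cast; exact h
    rw [ZMod.natCast_eq_zero_iff] at h'
    have := Nat.le_of_dvd (by norm_num) h'
    omega
  apply mul_left_cancel₀ h2ne
  have e1 : ∑ n ∈ range (p ^ a), (2 * (catalan n : ZMod p) + ((n + 1).centralBinom : ZMod p))
      = ∑ n ∈ range (p ^ a), 4 * (n.centralBinom : ZMod p) :=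
    Finset.sum_congr rfl fun n _ => key n
  rw [Finset.sum_add_distrib, ← Finset.mul_sum, ← Finset.mul_sum, hS a] at e1
  have e2 : ∑ n ∈ range (p ^ a), ((n + 1).centralBinom : ZMod p)
      = ∑ n ∈ range (p ^ a + 1), (n.centralBinom : ZMod p) - 1 := by
    rw [Finset.sum_range_succ' (fun n => (n.centralBinom : ZMod p))]
    simp [Nat.centralBinom]
  have e3 : ∑ n ∈ range (p ^ a + 1), (n.centralBinom : ZMod p) = 1 + 2 := by
    rw [Finset.sum_range_succ, hS a]
    obtain ⟨b, rfl⟩ : ∃ b, a = b + 1 := ⟨a - 1, by omega⟩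
    rw [hB b]
  rw [e2, e3] at e1
  -- e1 : 2 * ∑ catalan + (1 + 2 - 1) = 4 * 1
  linear_combination e1
end

section
/- For any prime p > 3 with p ≡ 2 (mod 3), and any odd a ≥ 1, the sum of the Catalan numbers ∑_{n=0}^{p^a - 1} C_n is congruent to -2 modulo p. -/
open Finset

private lemma aux_catalan_step (m : ℕ) :
    (2 * catalan m + Nat.centralBinom (m+1) : ℤ) = 4 * Nat.centralBinom m := by
  have h1 : ((m:ℤ)+1) * catalan m = Nat.centralBinom m := by
    exact_mod_cast succ_mul_catalan_eq_centralBinom m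
  have h2 : ((m:ℤ)+1) * Nat.centralBinom (m+1) = 2*(2*(m:ℤ)+1) * Nat.centralBinom m := by
    exact_mod_cast Nat.succ_mul_centralBinom_succ m
  have hm : ((m:ℤ)+1) ≠ 0 := by positivity
  apply mul_left_cancel₀ hm
  linear_combination 2 * h1 + h2

private lemma aux_sum_identity (N : ℕ) :
    2 * ∑ k ∈ range N, (catalan k : ℤ) + Nat.centralBinom N
      = 3 * ∑ k ∈ range N, (Nat.centralBinom k : ℤ) + 1 := by
  induction N with
  | zero => simp [Nat.centralBinom]
  | succ n ih =>
    rw [sum_range_succ, sum_range_succ]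
    have := aux_catalan_step n
    linarith [this, ih]

section ZModLemmas

variable {p : ℕ} [hpf : Fact p.Prime]

private lemma aux_md {a b c : ℕ} (hc : 0 < c) (hab : a < c) :
    (b * c + a) % c = a ∧ (b * c + a) / c = b := by
  constructor
  · rw [add_comm, Nat.add_mul_mod_self_right, Nat.mod_eq_of_lt hab]
  · rw [add_comm, Nat.add_mul_div_right _ _ hc, Nat.div_eq_of_lt hab, zero_add]

private lemma aux_digit (q r : ℕ) (hr : r < p) :
    ((Nat.centralBinom (q * p + r) : ZMod p))
      = (Nat.centralBinom q : ZMod p) * (Nat.centralBinom r : ZMod p) := by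
  have hp0 : 0 < p := hpf.out.pos
  obtain ⟨hmod, hdiv⟩ := aux_md hp0 hr (b := q)
  have key := (ZMod.intCast_eq_intCast_iff _ _ p).mpr
    (Choose.choose_modEq_choose_mod_mul_choose_div (p := p)
      (n := 2*(q*p+r)) (k := q*p+r))
  push_cast at key
  rw [hmod, hdiv] at key
  rcases lt_or_ge (2*r) p with h | h
  · have he : 2*(q*p+r) = (2*q) * p + 2*r := by ring
    obtain ⟨hmod2, hdiv2⟩ := aux_md hp0 h (b := 2*q)
    rw [he, hmod2, hdiv2] at key
    simp only [Nat.centralBinom]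
    rw [he, key]; ring
  · have he : 2*(q*p+r) = (2*q+1) * p + (2*r - p) := by
      have h2 : (2*q+1)*p = 2*(q*p) + p := by ring
      omega
    obtain ⟨hmod2, hdiv2⟩ := aux_md hp0 (show 2*r - p < p by omega) (b := 2*q+1)
    rw [he, hmod2, hdiv2] at key
    have hz : Nat.choose (2*r - p) r = 0 := Nat.choose_eq_zero_of_lt (by omega)
    rw [hz] at key
    have hz2 : (((2*r).choose r : ZMod p)) = 0 := by
      rw [ZMod.natCast_eq_zero_iff]
      exact hpf.out.dvd_choose hr (by omega) h
    simp only [Nat.centralBinom]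
    rw [he, key, hz2]
    simp

private lemma aux_cb_eq {m : ℕ} (hm : 2*m+1 = p) {k : ℕ} (hk : k ≤ m) :
    ((Nat.centralBinom k : ZMod p)) = (-4)^k * (m.choose k : ZMod p) := by
  induction k with
  | zero => simp [Nat.centralBinom]
  | succ k ih =>
    have hk' : k ≤ m := by omega
    have ih := ih hk'
    have hne : ((k:ZMod p) + 1) ≠ 0 := by
      have : (((k+1 : ℕ)) : ZMod p) ≠ 0 := by
        rw [Ne, ZMod.natCast_eq_zero_iff]
        intro hdvd
        have := Nat.le_of_dvd (by omega) hdvd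
        omega
      simpa using this
    apply mul_left_cancel₀ hne
    have h2 : ((k:ZMod p)+1) * (Nat.centralBinom (k+1) : ZMod p)
        = 2*(2*(k:ZMod p)+1) * (Nat.centralBinom k : ZMod p) := by
      exact_mod_cast congrArg (Nat.cast : ℕ → ZMod p) (Nat.succ_mul_centralBinom_succ k)
    have h3 : (m.choose (k+1) : ZMod p) * ((k:ZMod p)+1)
        = (m.choose k : ZMod p) * ((m : ZMod p) - (k : ZMod p)) := by
      have := congrArg (Nat.cast : ℕ → ZMod p) (Nat.choose_succ_right_eq m k)
      push_cast [Nat.cast_sub hk'] at this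
      exact_mod_cast this
    have hmz : 2 * ((m : ℕ) : ZMod p) + 1 = 0 := by
      have : ((2 * m + 1 : ℕ) : ZMod p) = 0 := by
        rw [ZMod.natCast_eq_zero_iff, hm]
      push_cast at this
      linear_combination this
    rw [h2, ih]
    linear_combination ((-4:ZMod p)^k * (m.choose k : ZMod p) * 2) * hmz
      - ((-4:ZMod p)^(k+1)) * h3

private lemma aux_sumT {m : ℕ} (hm : 2*m+1 = p) :
    ∑ k ∈ range p, (Nat.centralBinom k : ZMod p) = (-3)^m := by
  have hsub : range (m+1) ⊆ range p := range_subset_range.mpr (by omega)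
  rw [← sum_subset hsub (by
    intro k hk hk2
    simp only [mem_range] at hk hk2
    rw [Nat.centralBinom, ZMod.natCast_eq_zero_iff]
    exact hpf.out.dvd_choose hk (by omega) (by omega))]
  rw [sum_congr rfl (fun k hk => aux_cb_eq hm (by
    simp only [mem_range] at hk; omega))]
  have := add_pow (-4 : ZMod p) 1 m
  simp only [one_pow, mul_one] at this
  rw [← this]
  norm_num

private lemma aux_sum_pow (hp0 : 0 < p) (a : ℕ) :
    ∑ k ∈ range (p^a), (Nat.centralBinom k : ZMod p)
      = (∑ k ∈ range p, (Nat.centralBinom k : ZMod p))^a := by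
  induction a with
  | zero => simp [Nat.centralBinom]
  | succ a ih =>
    have hre : ∑ k ∈ range (p^a * p), (Nat.centralBinom k : ZMod p)
        = ∑ x ∈ range (p^a) ×ˢ range p,
            (Nat.centralBinom x.1 : ZMod p) * (Nat.centralBinom x.2 : ZMod p) := by
      apply Finset.sum_nbij' (i := fun k => (k / p, k % p)) (j := fun x => x.1 * p + x.2)
      · intro k hk
        simp only [mem_range, mem_product] at hk ⊢
        refine ⟨Nat.div_lt_of_lt_mul ?_, Nat.mod_lt _ hp0⟩
        rwa [mul_comm] at hk
      · intro x hx
        simp only [mem_range, mem_product] at hx ⊢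
        calc x.1 * p + x.2 < x.1 * p + p := by omega
        _ ≤ p^a * p := by
          have : x.1 + 1 ≤ p^a := hx.1
          calc x.1 * p + p = (x.1 + 1) * p := by ring
          _ ≤ p^a * p := Nat.mul_le_mul_right _ this
      · intro k _; exact Nat.div_add_mod' k p
      · intro x hx
        simp only [mem_range, mem_product] at hx
        obtain ⟨h1, h2⟩ := aux_md hp0 hx.2 (b := x.1)
        simp [h1, h2]
      · intro k hk
        simp only [mem_range] at hk
        have : k = (k / p) * p + k % p := (Nat.div_add_mod' k p).symm
        conv_lhs => rw [this]
        exact aux_digit (k / p) (k % p) (Nat.mod_lt _ hp0)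
    rw [pow_succ, hre, Finset.sum_product]
    simp_rw [← Finset.mul_sum, ← Finset.sum_mul]
    rw [ih, pow_succ]

private lemma aux_cb_pow (hp0 : 0 < p) (a : ℕ) :
    ((Nat.centralBinom (p^a) : ZMod p)) = 2 := by
  induction a with
  | zero =>
    show ((Nat.centralBinom 1 : ZMod p)) = 2
    norm_num [Nat.centralBinom]
  | succ a ih =>
    have : p^(a+1) = p^a * p + 0 := by rw [pow_succ, add_zero]
    rw [this, aux_digit (p^a) 0 hp0, ih]
    simp [Nat.centralBinom]

private lemma leg_3_2 : legendreSym 3 2 = -1 := by decide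

private lemma aux_neg3 (hp3 : 3 < p) (h3 : p % 3 = 2) (hodd : p % 2 = 1) :
    ((-3 : ZMod p)) ^ (p/2) = -1 := by
  haveI : Fact (Nat.Prime 3) := ⟨by norm_num⟩
  have hp2 : p ≠ 2 := by omega
  have hL : legendreSym p (-3) = -1 := by
    have hmul : legendreSym p (-3) = legendreSym p (-1) * legendreSym p 3 := by
      rw [show ((-3 : ℤ)) = -1 * 3 by norm_num, legendreSym.mul]
    have h1 : legendreSym p (-1) = (-1)^(p/2) := by
      rw [legendreSym.at_neg_one hp2, ZMod.χ₄_eq_neg_one_pow hodd]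
    have hqr := legendreSym.quadratic_reciprocity' (p := 3) (q := p) (by norm_num) hp2
    have h2 : legendreSym 3 (p : ℤ) = -1 := by
      rw [legendreSym.mod 3 (p : ℤ),
        show ((p:ℤ) % ((3:ℕ):ℤ)) = 2 from by
          have : (p:ℤ) % 3 = 2 := by omega
          push_cast
          omega]
      exact leg_3_2
    rw [hmul, h1]
    rw [h2] at hqr
    norm_num at hqr
    rw [hqr]
    have hsq : ((-1:ℤ)^(p/2))*((-1:ℤ)^(p/2)) = 1 := by
      rw [← pow_add]
      exact Even.neg_one_pow ⟨p/2, rfl⟩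
    rw [mul_neg, hsq]
  have key := legendreSym.eq_pow p (-3)
  rw [hL] at key
  push_cast at key
  exact key.symm

end ZModLemmas

theorem stmt13 (p a : ℕ) (hp : p.Prime) (hp3 : 3 < p) (h3 : p % 3 = 2) (ha : 1 ≤ a) (hodd : Odd a) :
    (∑ n ∈ Finset.range (p^a), (catalan n : ℤ)) ≡ -2 [ZMOD (p : ℤ)] := by
  haveI : Fact p.Prime := ⟨hp⟩
  have hodd2 : p % 2 = 1 := Nat.odd_iff.mp (hp.odd_of_ne_two (by omega))
  have hp0 : 0 < p := hp.pos
  rw [← ZMod.intCast_eq_intCast_iff]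
  push_cast
  -- goal : ∑ n ∈ range (p^a), (catalan n : ZMod p) = -2
  have hid := aux_sum_identity (p^a)
  have hid' : 2 * ∑ k ∈ range (p^a), (catalan k : ZMod p)
      + (Nat.centralBinom (p^a) : ZMod p)
      = 3 * ∑ k ∈ range (p^a), (Nat.centralBinom k : ZMod p) + 1 := by
    have := congrArg (Int.cast : ℤ → ZMod p) hid
    push_cast at this
    exact_mod_cast this
  obtain ⟨m, hm⟩ : ∃ m, 2*m+1 = p := ⟨p/2, by omega⟩
  have hm2 : p/2 = m := by omega
  rw [aux_cb_pow hp0, aux_sum_pow hp0, aux_sumT hm] at hid'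
  have hneg3 : ((-3 : ZMod p)) ^ m = -1 := by
    rw [← hm2]; exact aux_neg3 hp3 h3 hodd2
  rw [hneg3] at hid'
  rw [hodd.neg_one_pow] at hid'
  have h2ne : (2 : ZMod p) ≠ 0 := by
    have : (((2:ℕ)) : ZMod p) ≠ 0 := by
      rw [Ne, ZMod.natCast_eq_zero_iff]
      intro hdvd
      have := Nat.le_of_dvd (by omega) hdvd
      omega
    simpa using this
  apply mul_left_cancel₀ h2ne
  linear_combination hid'
end

section
/- For any prime p > 2 and any a ≥ 1, the triple sum ∑_{m1=0}^{p^a-1} ∑_{m2=0}^{p^a-1} ∑_{m3=0}^{p^a-1} (m1+m2+m3)!/(m1! m2! m3!) is congruent to 1 modulo p. -/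
open Finset

-- trinomial
def Tn (x y z : ℕ) : ℕ := (x + y + z).choose x * (y + z).choose y

section
variable {p : ℕ} [hFp : Fact p.Prime]

lemma key0 {u v : ℕ} (hu : u < p) (hv : v < p) (h : p ≤ u + v) :
    (((u + v).choose u : ℕ) : ZMod p) = 0 := by
  have := Nat.Prime.dvd_choose_add hFp.out hu hv h
  exact_mod_cast (ZMod.natCast_eq_zero_iff _ _).mpr this

lemma luc1 (n k : ℕ) :
    ((n.choose k : ℕ) : ZMod p) = ((n % p).choose (k % p) : ℕ) * ((n / p).choose (k / p) : ℕ) := by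
  have := @Choose.choose_modEq_choose_mod_mul_choose_div n k p _
  have h2 := (ZMod.intCast_eq_intCast_iff _ _ _).mpr this
  push_cast at h2 ⊢
  exact h2
end

section
variable {p : ℕ} [hFp : Fact p.Prime]

lemma Tluc (x y z : ℕ) :
    ((Tn x y z : ℕ) : ZMod p) =
      (Tn (x % p) (y % p) (z % p) : ℕ) * (Tn (x / p) (y / p) (z / p) : ℕ) := by
  have hp : 0 < p := hFp.out.pos
  have hx := Nat.mod_lt x hp
  have hy := Nat.mod_lt y hp
  have hz := Nat.mod_lt z hp
  unfold Tn
  push_cast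
  by_cases hyz : p ≤ y % p + z % p
  · -- carry in y+z: both sides vanish
    have hr : (((y % p + z % p).choose (y % p) : ℕ) : ZMod p) = 0 := key0 hy hz hyz
    have hl : (((y + z).choose y : ℕ) : ZMod p) = 0 := by
      rw [luc1]
      have e1 : (y + z) % p = y % p + z % p - p := by
        conv_lhs => rw [Nat.add_mod]
        rw [Nat.mod_eq_sub_mod hyz, Nat.mod_eq_of_lt (by omega)]
      rw [e1, Nat.choose_eq_zero_of_lt (by omega)]
      simp
    rw [hl, hr]; ring
  · push_neg at hyz
    have eyzm : (y + z) % p = y % p + z % p := by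
      rw [Nat.add_mod, Nat.mod_eq_of_lt hyz]
    have eyzd : (y + z) / p = y / p + z / p := by
      rw [Nat.add_div hp]
      simp [hyz.not_ge]
    by_cases hs : p ≤ x % p + (y % p + z % p)
    · -- carry in x + (y+z)
      have hr : (((x % p + y % p + z % p).choose (x % p) : ℕ) : ZMod p) = 0 := by
        have := key0 (p := p) hx (v := y % p + z % p) (by omega) hs
        rwa [← add_assoc] at this
      have hl : (((x + y + z).choose x : ℕ) : ZMod p) = 0 := by
        rw [luc1]
        have e1 : (x + y + z) % p = x % p + y % p + z % p - p := by
          rw [add_assoc, Nat.add_mod, eyzm, Nat.mod_eq_sub_mod (by omega),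
            Nat.mod_eq_of_lt (by omega)]
          omega
        rw [e1, Nat.choose_eq_zero_of_lt (by omega)]
        simp
      rw [hl, hr]; ring
    · push_neg at hs
      have e1 : (x + y + z) % p = x % p + y % p + z % p := by
        rw [add_assoc, Nat.add_mod, eyzm, Nat.mod_eq_of_lt (by omega)]
        omega
      have e2 : (x + y + z) / p = x / p + y / p + z / p := by
        rw [add_assoc, Nat.add_div hp, eyzm, eyzd]
        simp [Nat.mod_eq_of_lt, hs.not_ge, Nat.mod_eq_of_lt hyz]
        omega
      rw [luc1 (x+y+z) x, luc1 (y+z) y, e1, e2, eyzm, eyzd]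
      ring
end

lemma sum_range_mul' {M : Type*} [AddCommMonoid M] (f : ℕ → M) (m n : ℕ) :
    ∑ i ∈ range (m * n), f i = ∑ q ∈ range m, ∑ r ∈ range n, f (n * q + r) := by
  induction m with
  | zero => simp
  | succ m ih =>
    rw [Nat.succ_mul, Finset.sum_range_add, ih, Finset.sum_range_succ]
    congr 1
    exact Finset.sum_congr rfl fun r _ => by rw [mul_comm n m]

lemma natid (N : ℕ) :
    ∑ x ∈ range N, ∑ y ∈ range (N - x), ∑ z ∈ range (N - x - y), Tn x y z
      = ∑ n ∈ range N, 3 ^ n := by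
  have shell : ∀ n : ℕ, ∑ x ∈ range (n + 1), ∑ y ∈ range (n - x + 1), Tn x y (n - x - y) = 3 ^ n := by
    intro n
    have h1 : ∀ x ∈ range (n + 1),
        ∑ y ∈ range (n - x + 1), Tn x y (n - x - y) = n.choose x * 2 ^ (n - x) := by
      intro x hx
      rw [mem_range] at hx
      have : ∀ y ∈ range (n - x + 1), Tn x y (n - x - y) = n.choose x * (n - x).choose y := by
        intro y hy
        rw [mem_range] at hy
        unfold Tn
        have e1 : x + y + (n - x - y) = n := by omega
        have e2 : y + (n - x - y) = n - x := by omega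
        rw [e1, e2]
      rw [Finset.sum_congr rfl this, ← Finset.mul_sum, Nat.sum_range_choose]
    rw [Finset.sum_congr rfl h1]
    have := add_pow 1 2 n (R := ℕ)
    simp only [one_pow, one_mul, mul_comm, Nat.cast_id] at this ⊢
    rw [show (3:ℕ) = 1 + 2 by norm_num, this]
  rw [← Finset.sum_congr rfl fun n _ => shell n]
  rw [Finset.sum_sigma', Finset.sum_sigma', Finset.sum_sigma', Finset.sum_sigma']
  refine Finset.sum_nbij' (i := fun a => ⟨⟨a.1.1 + a.1.2 + a.2, a.1.1⟩, a.1.2⟩)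
    (j := fun b => ⟨⟨b.1.2, b.2⟩, b.1.1 - b.1.2 - b.2⟩) ?_ ?_ ?_ ?_ ?_
  · rintro ⟨⟨x, y⟩, z⟩ h
    simp only [mem_sigma, mem_range] at h ⊢
    omega
  · rintro ⟨⟨n, x⟩, y⟩ h
    simp only [mem_sigma, mem_range] at h ⊢
    omega
  · rintro ⟨⟨x, y⟩, z⟩ h
    simp only [mem_sigma, mem_range] at h
    have e : x + y + z - x - y = z := by omega
    simp [e]
  · rintro ⟨⟨n, x⟩, y⟩ h
    simp only [mem_sigma, mem_range] at h
    have e : x + y + (n - x - y) = n := by omega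
    simp [e]
  · rintro ⟨⟨x, y⟩, z⟩ h
    simp only [mem_sigma, mem_range] at h
    simp only
    congr 1
    omega

section
variable {p : ℕ} [hFp : Fact p.Prime]

noncomputable def S (p N : ℕ) : ZMod p :=
  ∑ x ∈ range N, ∑ y ∈ range N, ∑ z ∈ range N, ((Tn x y z : ℕ) : ZMod p)

lemma Sstep (N : ℕ) : S p (N * p) = S p N * S p p := by
  unfold S
  rw [sum_range_mul' _ N p]
  have hp : 0 < p := hFp.out.pos
  have key : ∀ qx ∈ range N, ∀ rx ∈ range p, ∀ qy ∈ range N, ∀ ry ∈ range p,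
      ∀ qz ∈ range N, ∀ rz ∈ range p,
      ((Tn (p * qx + rx) (p * qy + ry) (p * qz + rz) : ℕ) : ZMod p)
        = ((Tn qx qy qz : ℕ) : ZMod p) * ((Tn rx ry rz : ℕ) : ZMod p) := by
    intro qx _ rx hrx qy _ ry hry qz _ rz hrz
    rw [mem_range] at hrx hry hrz
    rw [Tluc]
    have m1 : (p * qx + rx) % p = rx := by rw [Nat.mul_add_mod, Nat.mod_eq_of_lt hrx]
    have m2 : (p * qy + ry) % p = ry := by rw [Nat.mul_add_mod, Nat.mod_eq_of_lt hry]
    have m3 : (p * qz + rz) % p = rz := by rw [Nat.mul_add_mod, Nat.mod_eq_of_lt hrz]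
    have d1 : (p * qx + rx) / p = qx := by
      rw [Nat.mul_add_div hp, Nat.div_eq_of_lt hrx, add_zero]
    have d2 : (p * qy + ry) / p = qy := by
      rw [Nat.mul_add_div hp, Nat.div_eq_of_lt hry, add_zero]
    have d3 : (p * qz + rz) / p = qz := by
      rw [Nat.mul_add_div hp, Nat.div_eq_of_lt hrz, add_zero]
    rw [m1, m2, m3, d1, d2, d3, mul_comm]
  calc ∑ qx ∈ range N, ∑ rx ∈ range p,
        ∑ y ∈ range (N * p), ∑ z ∈ range (N * p), ((Tn (p * qx + rx) y z : ℕ) : ZMod p)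
      = ∑ qx ∈ range N, ∑ rx ∈ range p, ∑ qy ∈ range N, ∑ ry ∈ range p,
          ∑ qz ∈ range N, ∑ rz ∈ range p,
          ((Tn qx qy qz : ℕ) : ZMod p) * ((Tn rx ry rz : ℕ) : ZMod p) := by
        refine Finset.sum_congr rfl fun qx hqx => Finset.sum_congr rfl fun rx hrx => ?_
        rw [sum_range_mul' _ N p]
        refine Finset.sum_congr rfl fun qy hqy => Finset.sum_congr rfl fun ry hry => ?_
        rw [sum_range_mul' _ N p]
        refine Finset.sum_congr rfl fun qz hqz => Finset.sum_congr rfl fun rz hrz => ?_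
        exact key qx hqx rx hrx qy hqy ry hry qz hqz rz hrz
    _ = S p N * S p p := by
        unfold S
        rw [Finset.sum_mul_sum]
        refine Finset.sum_congr rfl fun qx _ => Finset.sum_congr rfl fun rx _ => ?_
        rw [Finset.sum_mul_sum]
        refine Finset.sum_congr rfl fun qy _ => Finset.sum_congr rfl fun ry _ => ?_
        rw [Finset.sum_mul_sum]

lemma Spow (a : ℕ) : S p (p ^ a) = (S p p) ^ a := by
  induction a with
  | zero => simp [S, Tn]
  | succ a ih => rw [pow_succ, Sstep, ih, pow_succ]

end

section
variable {p : ℕ} [hFp : Fact p.Prime]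

lemma vanish {x y z : ℕ} (hx : x < p) (hy : y < p) (hz : z < p) (h : p ≤ x + y + z) :
    ((Tn x y z : ℕ) : ZMod p) = 0 := by
  unfold Tn
  push_cast
  by_cases hyz : p ≤ y + z
  · rw [key0 hy hz hyz]; ring
  · push_neg at hyz
    rw [add_assoc, key0 hx hyz (by omega)]; ring

lemma Sp1 (hp2 : 2 < p) : S p p = 1 := by
  have hp : 0 < p := hFp.out.pos
  have step1 : S p p
      = ∑ x ∈ range p, ∑ y ∈ range (p - x), ∑ z ∈ range (p - x - y),
          ((Tn x y z : ℕ) : ZMod p) := by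
    unfold S
    refine Finset.sum_congr rfl fun x hx => ?_
    rw [mem_range] at hx
    have inner : ∀ y ∈ range p,
        ∑ z ∈ range p, ((Tn x y z : ℕ) : ZMod p)
          = ∑ z ∈ range (p - x - y), ((Tn x y z : ℕ) : ZMod p) := by
      intro y hy
      rw [mem_range] at hy
      refine (Finset.sum_subset (Finset.range_subset_range.mpr (by omega)) ?_).symm
      intro z hz hz'
      rw [mem_range] at hz
      rw [mem_range, not_lt] at hz'
      exact vanish hx hy hz (by omega)
    rw [Finset.sum_congr rfl inner]
    refine (Finset.sum_subset (Finset.range_subset_range.mpr (by omega)) ?_).symm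
    intro y hy hy'
    rw [mem_range, not_lt] at hy'
    have : p - x - y = 0 := by omega
    rw [this]
    simp
  rw [step1]
  have : ∑ x ∈ range p, ∑ y ∈ range (p - x), ∑ z ∈ range (p - x - y),
      ((Tn x y z : ℕ) : ZMod p)
      = (((∑ x ∈ range p, ∑ y ∈ range (p - x), ∑ z ∈ range (p - x - y), Tn x y z : ℕ)) : ZMod p) := by
    push_cast
    rfl
  rw [this, natid]
  push_cast
  have hg := geom_sum_mul (3 : ZMod p) p
  rw [ZMod.pow_card] at hg
  have h31 : (3 : ZMod p) - 1 = 2 := by norm_num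
  rw [h31] at hg
  have h2ne : (2 : ZMod p) ≠ 0 := by
    intro h
    have : ((2 : ℕ) : ZMod p) = 0 := by exact_mod_cast h
    rw [ZMod.natCast_eq_zero_iff] at this
    have := Nat.le_of_dvd (by norm_num) this
    omega
  have : (∑ i ∈ range p, (3 : ZMod p) ^ i) * 2 = 1 * 2 := by
    rw [hg]; norm_num
  exact mul_right_cancel₀ h2ne this

end

lemma multi_eq (m : Fin 3 → ℕ) :
    Nat.multinomial Finset.univ m = Tn (m 0) (m 1) (m 2) := by
  have huniv : (Finset.univ : Finset (Fin 3)) = insert 0 (insert 1 {2}) := by decide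
  rw [huniv, Nat.multinomial_insert (by decide), Nat.multinomial_insert (by decide),
    Nat.multinomial_singleton]
  simp [Tn, Finset.sum_insert, add_assoc]

theorem stmt18 (p a : ℕ) (hp : p.Prime) (hp2 : 2 < p) (ha : 1 ≤ a) :
    (∑ m ∈ Fintype.piFinset (fun _ : Fin 3 => Finset.range (p^a)),
      (Nat.multinomial Finset.univ m : ℤ)) ≡ 1 [ZMOD (p : ℤ)] := by
  haveI : Fact p.Prime := ⟨hp⟩
  have key : ∑ m ∈ Fintype.piFinset (fun _ : Fin 3 => Finset.range (p^a)),
      ((Nat.multinomial Finset.univ m : ℕ) : ZMod p) = S p (p ^ a) := by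
    unfold S
    rw [← Finset.sum_product', ← Finset.sum_product']
    refine Finset.sum_nbij' (i := fun m => ((m 0, m 1), m 2))
      (j := fun x => ![x.1.1, x.1.2, x.2]) ?_ ?_ ?_ ?_ ?_
    · intro m hm
      simp only [Fintype.mem_piFinset] at hm
      simp only [Finset.mem_product]
      exact ⟨⟨hm 0, hm 1⟩, hm 2⟩
    · rintro ⟨⟨x, y⟩, z⟩ hx
      simp only [Finset.mem_product] at hx
      simp only [Fintype.mem_piFinset]
      intro i
      fin_cases i <;> simp [hx.1.1, hx.1.2, hx.2]
    · intro m hm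
      funext i
      fin_cases i <;> rfl
    · rintro ⟨⟨x, y⟩, z⟩ hx
      rfl
    · intro m hm
      rw [multi_eq]
  have hmod : (((∑ m ∈ Fintype.piFinset (fun _ : Fin 3 => Finset.range (p^a)),
      (Nat.multinomial Finset.univ m : ℤ)) : ℤ) : ZMod p) = ((1 : ℤ) : ZMod p) := by
    push_cast
    rw [key, Spow, Sp1 hp2, one_pow]
  exact (ZMod.intCast_eq_intCast_iff _ _ _).mp hmod
end
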